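/- arXiv:1010.3673 — 5 statements merged into one kernel-verified Lean document; each statement's English description precedes it below -/
import Mathlib

section
/- Let X be a geodesic metric space and x a point of X. If X \ {x} is disconnected, then the connected components of X \ {x} coincide with its path components. -/
/-- A map `γ` is a geodesic (unit-speed) on the interval `[a,b]`. -/
def IsGeodesicOn {F : Type*} [MetricSpace F] (γ : ℝ → F) (a b : ℝ) : Prop :=
  ∀ s ∈ Set.Icc a b, ∀ t ∈ Set.Icc a b, dist (γ s) (γ t) = |s - t|

/-- A metric space is geodesic if every two points are joined by a geodesic. -/
def GeodesicSpace (F : Type*) [MetricSpace F] : Prop :=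
  ∀ x y : F, ∃ γ : ℝ → F, γ 0 = x ∧ γ (dist x y) = y ∧ IsGeodesicOn γ 0 (dist x y)

/-- In a geodesic space, every metric ball is path-connected: geodesics from the
center stay inside the ball. -/
lemma ball_isPathConnected {X : Type*} [MetricSpace X] (hgeo : GeodesicSpace X)
    (p : X) (r : ℝ) (hr : 0 < r) : IsPathConnected (Metric.ball p r) := by
  refine ⟨p, Metric.mem_ball_self hr, ?_⟩
  intro q hq
  obtain ⟨γ, h0, hd, hiso⟩ := hgeo p q
  set d := dist p q with hdd
  have hd0 : 0 ≤ d := dist_nonneg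
  have hcont : ContinuousOn γ (Set.Icc 0 d) := by
    refine (LipschitzOnWith.of_dist_le_mul (K := 1) ?_).continuousOn
    intro s hs t ht
    rw [hiso s hs t ht]
    simp [Real.dist_eq]
  have hmem : ∀ t : unitInterval, (t : ℝ) * d ∈ Set.Icc (0:ℝ) d := by
    intro t
    constructor
    · exact mul_nonneg t.2.1 hd0
    · calc (t : ℝ) * d ≤ 1 * d := by apply mul_le_mul_of_nonneg_right t.2.2 hd0
      _ = d := one_mul d
  have hdist : ∀ t : unitInterval, dist (γ ((t:ℝ) * d)) p = (t:ℝ) * d := by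
    intro t
    conv_lhs => rw [← h0]
    rw [hiso _ (hmem t) 0 (Set.mem_Icc.2 ⟨le_refl 0, hd0⟩)]
    rw [sub_zero, abs_of_nonneg (mul_nonneg t.2.1 hd0)]
  refine ⟨⟨⟨fun t => γ ((t:ℝ) * d), ?_⟩, ?_, ?_⟩, ?_⟩
  · exact hcont.comp_continuous (by continuity) hmem
  · simp [h0]
  · simp [hd]
  · intro t
    simp only [Metric.mem_ball]
    calc dist (γ ((t:ℝ) * d)) p = (t:ℝ) * d := hdist t
      _ ≤ 1 * d := mul_le_mul_of_nonneg_right t.2.2 hd0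
      _ = dist q p := by rw [one_mul, dist_comm]
      _ < r := hq

/-- A geodesic metric space is locally path-connected. -/
lemma geodesic_locPathConnected {X : Type*} [MetricSpace X] (hgeo : GeodesicSpace X) :
    LocallyPathConnectedSpace X :=
  LocallyPathConnectedSpace.of_bases (fun _ => Metric.nhds_basis_ball)
    (fun p r hr => ball_isPathConnected hgeo p r hr)

/-- in a geodesic metric space `X`, if `X \ {x}` is disconnected, then the
connected components of `X \ {x}` coincide with its path components. -/
theorem stmt_0 {X : Type*} [MetricSpace X] (hgeo : GeodesicSpace X) (x : X)
    (hdisc : ¬ IsPreconnected ({x}ᶜ : Set X)) :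
    ∀ y ∈ ({x}ᶜ : Set X),
      connectedComponentIn ({x}ᶜ : Set X) y = pathComponentIn ({x}ᶜ : Set X) y := by
  have : LocallyPathConnectedSpace X := geodesic_locPathConnected hgeo
  intro y hy
  set F : Set X := {x}ᶜ with hF
  have hFopen : IsOpen F := isOpen_compl_singleton
  set P : Set X := pathComponentIn F y with hP
  have hPopen : IsOpen P := hFopen.pathComponentIn y
  apply Set.Subset.antisymm
  · -- connectedComponentIn ⊆ pathComponentIn
    set U : Set X := {z ∈ F | z ∉ P} with hU
    have hUopen : IsOpen U := by
      rw [isOpen_iff_mem_nhds]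
      intro z hz
      have hzF : z ∈ F := hz.1
      have hsub : pathComponentIn F z ⊆ U := by
        intro w hw
        refine ⟨pathComponentIn_subset hw, fun hwP => hz.2 ?_⟩
        have h1 : pathComponentIn F w = pathComponentIn F z := pathComponentIn_congr hw
        have h2 : pathComponentIn F w = pathComponentIn F y := pathComponentIn_congr hwP
        rw [hP, ← h2, h1]
        exact mem_pathComponentIn_self hzF
      exact Filter.mem_of_superset ((hFopen.pathComponentIn z).mem_nhds
        (mem_pathComponentIn_self hzF)) hsub
    have hC : IsPreconnected (connectedComponentIn F y) := isPreconnected_connectedComponentIn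
    by_contra hsub
    rw [Set.not_subset] at hsub
    obtain ⟨z, hzC, hzP⟩ := hsub
    have hcover : connectedComponentIn F y ⊆ P ∪ U := by
      intro w hw
      by_cases h : w ∈ P
      · exact Or.inl h
      · exact Or.inr ⟨connectedComponentIn_subset F y hw, h⟩
    have hne1 : (connectedComponentIn F y ∩ P).Nonempty :=
      ⟨y, mem_connectedComponentIn hy, mem_pathComponentIn_self hy⟩
    have hne2 : (connectedComponentIn F y ∩ U).Nonempty :=
      ⟨z, hzC, connectedComponentIn_subset F y hzC, hzP⟩
    obtain ⟨w, _, hwP, hwU⟩ := hC P U hPopen hUopen hcover hne1 hne2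
    exact hwU.2 hwP
  · -- pathComponentIn ⊆ connectedComponentIn
    exact (isPathConnected_pathComponentIn hy).isConnected.isPreconnected.subset_connectedComponentIn
      (mem_pathComponentIn_self hy) pathComponentIn_subset
end

section
/- Let F be a geodesic metric space tree-graded with respect to a collection P of pieces. Then every two distinct pieces intersect in at most one point, and consequently the intersection of any topological arc in F with a piece, if nonempty and containing more than one point, is a sub-arc. -/
/-- A subset is geodesic: any two of its points are joined by a geodesic inside it. -/
def GeodesicSubset {F : Type*} [MetricSpace F] (p : Set F) : Prop :=
  ∀ x ∈ p, ∀ y ∈ p, ∃ γ : ℝ → F, γ 0 = x ∧ γ (dist x y) = y ∧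
    IsGeodesicOn γ 0 (dist x y) ∧ γ '' Set.Icc 0 (dist x y) ⊆ p

/-- A nontrivial simple geodesic triangle: a simple loop `γ` on `[0,L]` composed of three
geodesics `[0,a]`, `[a,b]`, `[b,L]`. -/
structure SimpleGeodesicTriangle {F : Type*} [MetricSpace F]
    (γ : ℝ → F) (a b L : ℝ) : Prop where
  L_pos : 0 < L
  ha : 0 ≤ a
  hab : a ≤ b
  hbL : b ≤ L
  side1 : IsGeodesicOn γ 0 a
  side2 : IsGeodesicOn γ a b
  side3 : IsGeodesicOn γ b L
  closed : γ 0 = γ L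
  simple : Set.InjOn γ (Set.Ico 0 L)

/-- `F` is tree-graded with respect to the collection `P` of pieces. -/
structure IsTreeGraded {F : Type*} [MetricSpace F] (P : Set (Set F)) : Prop where
  pieces_nonempty : ∀ p ∈ P, p.Nonempty
  pieces_closed : ∀ p ∈ P, IsClosed p
  pieces_geodesic : ∀ p ∈ P, GeodesicSubset p
  T1 : ∀ p ∈ P, ∀ q ∈ P, p ≠ q → (p ∩ q).Subsingleton
  T2 : ∀ (γ : ℝ → F) (a b L : ℝ), SimpleGeodesicTriangle γ a b L →
    ∃ p ∈ P, γ '' Set.Icc 0 L ⊆ p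

namespace TG
open Set

variable {F : Type*} [MetricSpace F]

theorem geo_continuousOn {γ : ℝ → F} {a b : ℝ} (h : IsGeodesicOn γ a b) :
    ContinuousOn γ (Set.Icc a b) := by
  have : LipschitzOnWith 1 γ (Set.Icc a b) := by
    apply LipschitzOnWith.of_dist_le_mul
    intro s hs t ht
    rw [h s hs t ht, Real.dist_eq]
    simp
  exact this.continuousOn

theorem geo_injOn {γ : ℝ → F} {a b : ℝ} (h : IsGeodesicOn γ a b) :
    Set.InjOn γ (Set.Icc a b) := by
  intro s hs t ht he
  have h2 := h s hs t ht
  rw [he, dist_self] at h2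
  have := abs_eq_zero.1 h2.symm
  linarith

theorem geo_mono {γ : ℝ → F} {d c e : ℝ} (h : IsGeodesicOn γ 0 d)
    (hc : 0 ≤ c) (he : e ≤ d) : IsGeodesicOn γ c e := by
  intro s hs t ht
  exact h s ⟨le_trans hc hs.1, le_trans hs.2 he⟩ t ⟨le_trans hc ht.1, le_trans ht.2 he⟩

theorem geo_sub_forward {γ : ℝ → F} {d c e : ℝ} (h : IsGeodesicOn γ 0 d)
    (hc : 0 ≤ c) (he : e ≤ d) : IsGeodesicOn (fun r => γ (c + r)) 0 (e - c) := by
  intro s hs t ht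
  have h1 : c + s ∈ Set.Icc 0 d := ⟨by linarith [hs.1], by linarith [hs.2]⟩
  have h2 : c + t ∈ Set.Icc 0 d := ⟨by linarith [ht.1], by linarith [ht.2]⟩
  have := h (c + s) h1 (c + t) h2
  simpa using this

theorem geo_sub_rev {γ : ℝ → F} {d c e : ℝ} (h : IsGeodesicOn γ 0 d)
    (hc : 0 ≤ c) (he : e ≤ d) : IsGeodesicOn (fun r => γ (e - r)) 0 (e - c) := by
  intro s hs t ht
  have h1 : e - s ∈ Set.Icc 0 d := ⟨by linarith [hs.2], by linarith [hs.1]⟩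
  have h2 : e - t ∈ Set.Icc 0 d := ⟨by linarith [ht.2], by linarith [ht.1]⟩
  have := h (e - s) h1 (e - t) h2
  rw [this]
  rw [abs_sub_comm]
  congr 1
  ring

theorem geo_const {x : F} : IsGeodesicOn (fun _ => x) 0 0 := by
  intro s hs t ht
  have h1 : s = 0 := le_antisymm hs.2 hs.1
  have h2 : t = 0 := le_antisymm ht.2 ht.1
  simp [h1, h2]

theorem geo_concat {γ1 γ2 : ℝ → F} {A D : ℝ} (hA : 0 ≤ A) (hD : 0 ≤ D)
    (g1 : IsGeodesicOn γ1 0 A) (g2 : IsGeodesicOn γ2 0 D) (hj : γ1 A = γ2 0)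
    (hdist : dist (γ1 0) (γ2 D) = A + D) :
    IsGeodesicOn (fun r => if r ≤ A then γ1 r else γ2 (r - A)) 0 (A + D) := by
  have key : ∀ s ∈ Set.Icc 0 (A + D), ∀ t ∈ Set.Icc 0 (A + D), s ≤ t →
      dist ((fun r => if r ≤ A then γ1 r else γ2 (r - A)) s)
        ((fun r => if r ≤ A then γ1 r else γ2 (r - A)) t) = t - s := by
    intro s hs t ht hst
    by_cases h1 : t ≤ A
    · have h2 : s ≤ A := le_trans hst h1
      simp only [if_pos h1, if_pos h2]
      rw [g1 s ⟨hs.1, h2⟩ t ⟨ht.1, h1⟩, abs_of_nonpos (by linarith)]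
      ring
    · push_neg at h1
      by_cases h2 : s ≤ A
      · simp only [if_pos h2, if_neg (not_le.2 h1)]
        have hd1 : dist (γ1 s) (γ1 A) = A - s := by
          rw [g1 s ⟨hs.1, h2⟩ A ⟨hA, le_refl A⟩, abs_of_nonpos (by linarith)]; ring
        have hd2 : dist (γ2 0) (γ2 (t - A)) = t - A := by
          rw [g2 0 ⟨le_refl 0, hD⟩ (t - A) ⟨by linarith, by linarith [ht.2]⟩,
            abs_of_nonpos (by linarith)]; ring
        have hle : dist (γ1 s) (γ2 (t - A)) ≤ t - s := by
          calc dist (γ1 s) (γ2 (t - A)) ≤ dist (γ1 s) (γ1 A) + dist (γ1 A) (γ2 (t - A)) :=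
                dist_triangle _ _ _
            _ = (A - s) + dist (γ2 0) (γ2 (t - A)) := by rw [hd1, hj]
            _ = t - s := by rw [hd2]; ring
        have hd3 : dist (γ1 0) (γ1 s) = s := by
          rw [g1 0 ⟨le_refl 0, hA⟩ s ⟨hs.1, h2⟩, abs_of_nonpos (by linarith [hs.1])]; ring
        have hd4 : dist (γ2 (t - A)) (γ2 D) = A + D - t := by
          rw [g2 (t - A) ⟨by linarith, by linarith [ht.2]⟩ D ⟨hD, le_refl D⟩,
            abs_of_nonpos (by linarith [ht.2])]; ring
        have hge : t - s ≤ dist (γ1 s) (γ2 (t - A)) := by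
          have := dist_triangle4 (γ1 0) (γ1 s) (γ2 (t - A)) (γ2 D)
          rw [hdist, hd3, hd4] at this
          linarith
        linarith
      · push_neg at h2
        simp only [if_neg (not_le.2 h1), if_neg (not_le.2 h2)]
        rw [g2 (s - A) ⟨by linarith, by linarith [hs.2]⟩ (t - A) ⟨by linarith, by linarith [ht.2]⟩,
          abs_of_nonpos (by linarith)]
        ring
  intro s hs t ht
  rcases le_total s t with h | h
  · rw [key s hs t ht h, abs_of_nonpos (by linarith)]; ring
  · rw [dist_comm, key t ht s hs h, abs_of_nonneg (by linarith)]


theorem tri {P : Set (Set F)} (hTG : IsTreeGraded P)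
    {γ1 γ2 γ3 : ℝ → F} {a1 a2 a3 : ℝ}
    (h1 : 0 ≤ a1) (h2 : 0 ≤ a2) (h3 : 0 ≤ a3) (hL : 0 < a1 + a2 + a3)
    (g1 : IsGeodesicOn γ1 0 a1) (g2 : IsGeodesicOn γ2 0 a2) (g3 : IsGeodesicOn γ3 0 a3)
    (e12 : γ1 a1 = γ2 0) (e23 : γ2 a2 = γ3 0) (e31 : γ3 a3 = γ1 0)
    (d12 : ∀ s ∈ Set.Ico 0 a1, ∀ t ∈ Set.Ico 0 a2, γ1 s ≠ γ2 t)
    (d13 : ∀ s ∈ Set.Ico 0 a1, ∀ t ∈ Set.Ico 0 a3, γ1 s ≠ γ3 t)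
    (d23 : ∀ s ∈ Set.Ico 0 a2, ∀ t ∈ Set.Ico 0 a3, γ2 s ≠ γ3 t) :
    ∃ q ∈ P, γ1 '' Set.Icc 0 a1 ∪ γ2 '' Set.Icc 0 a2 ∪ γ3 '' Set.Icc 0 a3 ⊆ q := by
  set L := a1 + a2 + a3 with hLdef
  set Γ : ℝ → F := fun r => if r ≤ a1 then γ1 r else if r ≤ a1 + a2 then γ2 (r - a1)
    else γ3 (r - a1 - a2) with hΓ
  have hv1 : ∀ r ∈ Set.Icc 0 a1, Γ r = γ1 r := fun r hr => if_pos hr.2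
  have hv2 : ∀ r ∈ Set.Icc a1 (a1 + a2), Γ r = γ2 (r - a1) := by
    intro r hr
    by_cases h : r ≤ a1
    · have hra : r = a1 := le_antisymm h hr.1
      subst hra
      rw [hv1 r ⟨by linarith, le_refl r⟩, e12, sub_self]
    · show Γ r = _
      rw [hΓ]
      simp only [if_neg h, if_pos hr.2]
  have hv3 : ∀ r ∈ Set.Icc (a1 + a2) L, Γ r = γ3 (r - a1 - a2) := by
    intro r hr
    by_cases h : r ≤ a1 + a2
    · have hra : r = a1 + a2 := le_antisymm h hr.1
      have := hv2 r ⟨by linarith [hr.1], h⟩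
      rw [this, hra]
      have : a1 + a2 - a1 = a2 := by ring
      rw [this, e23]
      congr 1
      ring
    · show Γ r = _
      rw [hΓ]
      simp only [if_neg (by intro hc; exact h (by linarith) : ¬ r ≤ a1), if_neg h]
  have side1 : IsGeodesicOn Γ 0 a1 := by
    intro s hs t ht
    rw [hv1 s hs, hv1 t ht]; exact g1 s hs t ht
  have side2 : IsGeodesicOn Γ a1 (a1 + a2) := by
    intro s hs t ht
    rw [hv2 s hs, hv2 t ht, g2 (s - a1) ⟨by linarith [hs.1], by linarith [hs.2]⟩
      (t - a1) ⟨by linarith [ht.1], by linarith [ht.2]⟩]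
    congr 1; ring
  have side3 : IsGeodesicOn Γ (a1 + a2) L := by
    intro s hs t ht
    rw [hv3 s hs, hv3 t ht, g3 (s - a1 - a2) ⟨by linarith [hs.1], by linarith [hs.2]⟩
      (t - a1 - a2) ⟨by linarith [ht.1], by linarith [ht.2]⟩]
    congr 1; ring
  have hclosed : Γ 0 = Γ L := by
    rw [hv1 0 ⟨le_refl 0, h1⟩, hv3 L ⟨by linarith, le_refl L⟩]
    rw [show L - a1 - a2 = a3 by rw [hLdef]; ring, e31]
  have hsimple : Set.InjOn Γ (Set.Ico 0 L) := by
    have hcase : ∀ r ∈ Set.Ico 0 L,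
        (r ∈ Set.Ico 0 a1 ∧ Γ r = γ1 r) ∨
        (r - a1 ∈ Set.Ico 0 a2 ∧ Γ r = γ2 (r - a1)) ∨
        (r - a1 - a2 ∈ Set.Ico 0 a3 ∧ Γ r = γ3 (r - a1 - a2)) := by
      intro r hr
      by_cases hc1 : r < a1
      · exact Or.inl ⟨⟨hr.1, hc1⟩, hv1 r ⟨hr.1, le_of_lt hc1⟩⟩
      · push_neg at hc1
        by_cases hc2 : r < a1 + a2
        · exact Or.inr (Or.inl ⟨⟨by linarith, by linarith⟩,
            hv2 r ⟨hc1, le_of_lt hc2⟩⟩)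
        · push_neg at hc2
          exact Or.inr (Or.inr ⟨⟨by linarith, by linarith [hr.2]⟩,
            hv3 r ⟨hc2, le_of_lt hr.2⟩⟩)
    intro r hr r' hr' he
    rcases hcase r hr with ⟨hm, hval⟩ | ⟨hm, hval⟩ | ⟨hm, hval⟩ <;>
      rcases hcase r' hr' with ⟨hm', hval'⟩ | ⟨hm', hval'⟩ | ⟨hm', hval'⟩ <;>
      rw [hval, hval'] at he
    · exact geo_injOn g1 ⟨hm.1, le_of_lt hm.2⟩ ⟨hm'.1, le_of_lt hm'.2⟩ he
    · exact absurd he (d12 r hm (r' - a1) hm')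
    · exact absurd he (d13 r hm (r' - a1 - a2) hm')
    · exact absurd he.symm (d12 r' hm' (r - a1) hm)
    · have := geo_injOn g2 ⟨hm.1, le_of_lt hm.2⟩ ⟨hm'.1, le_of_lt hm'.2⟩ he
      linarith
    · exact absurd he (d23 (r - a1) hm (r' - a1 - a2) hm')
    · exact absurd he.symm (d13 r' hm' (r - a1 - a2) hm)
    · exact absurd he.symm (d23 (r' - a1) hm' (r - a1 - a2) hm)
    · have := geo_injOn g3 ⟨hm.1, le_of_lt hm.2⟩ ⟨hm'.1, le_of_lt hm'.2⟩ he
      linarith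
  have htri : SimpleGeodesicTriangle Γ a1 (a1 + a2) L :=
    ⟨hL, h1, by linarith, by rw [hLdef]; linarith, side1, side2, side3, hclosed, hsimple⟩
  obtain ⟨q, hq, hsub⟩ := hTG.T2 Γ a1 (a1 + a2) L htri
  refine ⟨q, hq, ?_⟩
  rintro z ((⟨s, hs, rfl⟩ | ⟨s, hs, rfl⟩) | ⟨s, hs, rfl⟩)
  · exact hsub ⟨s, ⟨hs.1, by rw [hLdef]; linarith [hs.2]⟩, hv1 s hs⟩
  · refine hsub ⟨a1 + s, ⟨by linarith [hs.1], by rw [hLdef]; linarith [hs.2]⟩, ?_⟩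
    rw [hv2 (a1 + s) ⟨by linarith [hs.1], by linarith [hs.2]⟩]
    congr 1; ring
  · refine hsub ⟨a1 + a2 + s, ⟨by linarith [hs.1], by rw [hLdef]; linarith [hs.2]⟩, ?_⟩
    rw [hv3 (a1 + a2 + s) ⟨by linarith [hs.1], by rw [hLdef]; linarith [hs.2]⟩]
    congr 1; ring

theorem entry_exists {p : Set F} (hpc : IsClosed p) {γ : ℝ → F} {d : ℝ} (hd : 0 ≤ d)
    (hg : IsGeodesicOn γ 0 d) (h0 : γ 0 ∉ p) (hdm : γ d ∈ p) :
    ∃ s, 0 < s ∧ s ≤ d ∧ γ s ∈ p ∧ ∀ t ∈ Set.Ico 0 s, γ t ∉ p := by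
  set K := Set.Icc 0 d ∩ γ ⁻¹' p with hK
  have hKc : IsClosed K := (geo_continuousOn hg).preimage_isClosed_of_isClosed isClosed_Icc hpc
  have hne : K.Nonempty := ⟨d, ⟨hd, le_refl d⟩, hdm⟩
  have hbdd : BddBelow K := ⟨0, fun t ht => ht.1.1⟩
  have hmem := hKc.csInf_mem hne hbdd
  refine ⟨sInf K, ?_, hmem.1.2, hmem.2, ?_⟩
  · rcases lt_or_eq_of_le hmem.1.1 with h | h
    · exact h
    · exact absurd (h ▸ hmem.2) h0
  · intro t ht htp
    have : sInf K ≤ t := csInf_le hbdd ⟨⟨ht.1, le_trans (le_of_lt ht.2) hmem.1.2⟩, htp⟩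
    linarith [ht.2]

theorem entry_unique {P : Set (Set F)} (hTG : IsTreeGraded P) {p : Set F} (hp : p ∈ P)
    {x : F} {α β : ℝ → F} {s1 s2 : ℝ}
    (hs1 : 0 ≤ s1) (hs2 : 0 ≤ s2)
    (gα : IsGeodesicOn α 0 s1) (gβ : IsGeodesicOn β 0 s2)
    (hα0 : α 0 = x) (hβ0 : β 0 = x)
    (hα1 : α s1 ∈ p) (hβ1 : β s2 ∈ p)
    (hαm : ∀ t ∈ Set.Ico 0 s1, α t ∉ p) (hβm : ∀ t ∈ Set.Ico 0 s2, β t ∉ p) :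
    α s1 = β s2 := by
  by_contra hne
  have hβcont := geo_continuousOn gβ
  have hβimg : IsCompact (β '' Set.Icc 0 s2) := isCompact_Icc.image_of_continuousOn hβcont
  set I := Set.Icc 0 s1 ∩ α ⁻¹' (β '' Set.Icc 0 s2) with hIdef
  have hIc : IsClosed I :=
    (geo_continuousOn gα).preimage_isClosed_of_isClosed isClosed_Icc hβimg.isClosed
  have hI0 : (0 : ℝ) ∈ I := ⟨⟨le_refl 0, hs1⟩, ⟨0, ⟨le_refl 0, hs2⟩, by rw [hβ0, hα0]⟩⟩
  have hIbdd : BddAbove I := ⟨s1, fun t ht => ht.1.2⟩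
  have hts := hIc.csSup_mem ⟨0, hI0⟩ hIbdd
  set ts := sSup I with hts_def
  obtain ⟨us, hus, husv⟩ := hts.2
  -- β-points in p only at s2
  have hβp : ∀ u ∈ Set.Icc 0 s2, β u ∈ p → u = s2 := by
    intro u hu hup
    by_contra hu2
    exact hβm u ⟨hu.1, lt_of_le_of_ne hu.2 hu2⟩ hup
  have hαp : ∀ u ∈ Set.Icc 0 s1, α u ∈ p → u = s1 := by
    intro u hu hup
    by_contra hu2
    exact hαm u ⟨hu.1, lt_of_le_of_ne hu.2 hu2⟩ hup
  have hts_lt : ts < s1 := by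
    rcases lt_or_eq_of_le hts.1.2 with h | h
    · exact h
    · exfalso
      rw [h] at husv
      have := hβp us hus (husv ▸ hα1)
      rw [this] at husv
      exact hne husv.symm
  have hm_notp : α ts ∉ p := hαm ts ⟨hts.1.1, hts_lt⟩
  have hus_lt : us < s2 := by
    rcases lt_or_eq_of_le hus.2 with h | h
    · exact h
    · exfalso; rw [h] at husv; exact hm_notp (husv ▸ hβ1)
  have hD : 0 < dist (α s1) (β s2) := dist_pos.2 hne
  obtain ⟨g, hg0, hgD, hggeo, hgsub⟩ :=
    hTG.pieces_geodesic p hp (α s1) hα1 (β s2) hβ1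
  set D := dist (α s1) (β s2) with hDdef
  -- apply tri
  have key := tri hTG (γ1 := fun r => α (ts + r)) (γ2 := g) (γ3 := fun r => β (s2 - r))
    (a1 := s1 - ts) (a2 := D) (a3 := s2 - us)
    (by linarith) (le_of_lt hD) (by linarith)
    (by linarith)
    (geo_sub_forward gα hts.1.1 (le_refl s1)) hggeo (geo_sub_rev gβ hus.1 (le_refl s2))
    (by beta_reduce; rw [show ts + (s1 - ts) = s1 by ring, hg0])
    (by beta_reduce; rw [hgD, show s2 - (0:ℝ) = s2 by ring])
    (by beta_reduce; rw [show s2 - (s2 - us) = us by ring, husv, add_zero])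
    ?_ ?_ ?_
  · obtain ⟨q, hq, hsub⟩ := key
    have he1 : α s1 ∈ q := hsub (Or.inl (Or.inl ⟨s1 - ts, ⟨by linarith, le_refl _⟩,
      by simp only []; rw [show ts + (s1 - ts) = s1 by ring]⟩))
    have he2 : β s2 ∈ q := hsub (Or.inl (Or.inr ⟨D, ⟨le_of_lt hD, le_refl D⟩, hgD⟩))
    have hm : α ts ∈ q := hsub (Or.inl (Or.inl ⟨0, ⟨le_refl 0, by linarith⟩, by
      simp only []; rw [add_zero]⟩))
    have hqp : p = q := by
      by_contra hpq
      exact hne (hTG.T1 p hp q hq hpq ⟨hα1, he1⟩ ⟨hβ1, he2⟩)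
    exact hm_notp (hqp ▸ hm)
  · -- d12 : side1 (outside p) vs side2 (inside p)
    intro s hs t ht heq
    have heq' : α (ts + s) = g t := heq
    have h1 : α (ts + s) ∉ p := hαm (ts + s) ⟨by linarith [hs.1, hts.1.1], by linarith [hs.2]⟩
    have h2 : g t ∈ p := hgsub ⟨t, ⟨ht.1, le_of_lt ht.2⟩, rfl⟩
    exact h1 (heq' ▸ h2)
  · -- d13 : side1 vs side3
    intro s hs t ht heq
    beta_reduce at heq
    have hmem : ts + s ∈ I := ⟨⟨by linarith [hs.1, hts.1.1], by linarith [hs.2]⟩,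
      ⟨s2 - t, ⟨by linarith [ht.2, hus.1], by linarith [ht.1]⟩, heq.symm⟩⟩
    have : ts + s ≤ ts := le_csSup hIbdd hmem
    have hs0 : s = 0 := by linarith [hs.1]
    rw [hs0, add_zero] at heq
    rw [← husv] at heq
    have := geo_injOn gβ ⟨hus.1, hus.2⟩ ⟨by linarith [ht.2, hus.1], by linarith [ht.1]⟩ heq
    linarith [ht.2]
  · -- d23 : side2 (inside p) vs side3
    intro s hs t ht heq
    beta_reduce at heq
    by_cases ht0 : t = 0
    · rw [ht0, sub_zero] at heq
      have := geo_injOn hggeo ⟨hs.1, le_of_lt hs.2⟩ ⟨le_of_lt hD, le_refl D⟩ (heq.trans hgD.symm)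
      linarith [hs.2]
    · have h2 : g s ∈ p := hgsub ⟨s, ⟨hs.1, le_of_lt hs.2⟩, rfl⟩
      have h3 : β (s2 - t) ∉ p := hβm (s2 - t) ⟨by linarith [ht.2, hus.1], by
        have : 0 < t := lt_of_le_of_ne ht.1 (Ne.symm ht0)
        linarith⟩
      exact h3 (heq ▸ h2)

def IsGate (p : Set F) (x e : F) : Prop :=
  e ∈ p ∧ ∀ z ∈ p, dist x z = dist x e + dist e z

theorem gate_unique {p : Set F} {x e e' : F} (h : IsGate p x e) (h' : IsGate p x e') :
    e = e' := by
  have h1 := h.2 e' h'.1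
  have h2 := h'.2 e h.1
  have h3 : dist e e' = 0 := by
    have hc : dist e' e = dist e e' := dist_comm e' e
    linarith [dist_nonneg (x := e) (y := e')]
  exact dist_eq_zero.1 h3

theorem gate_exists (hF : GeodesicSpace F) {P : Set (Set F)} (hTG : IsTreeGraded P)
    {p : Set F} (hp : p ∈ P) {x : F} (hx : x ∉ p) : ∃ e, IsGate p x e := by
  obtain ⟨z0, hz0⟩ := hTG.pieces_nonempty p hp
  obtain ⟨γ0, hγ00, hγ0d, hγ0g⟩ := hF x z0
  obtain ⟨s0, hs0pos, hs0le, hs0p, hs0m⟩ := entry_exists (hTG.pieces_closed p hp)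
    dist_nonneg hγ0g (by rw [hγ00]; exact hx) (by rw [hγ0d]; exact hz0)
  refine ⟨γ0 s0, hs0p, ?_⟩
  intro z hz
  obtain ⟨γ, hγ0', hγd, hγg⟩ := hF x z
  have hd : (0:ℝ) ≤ dist x z := dist_nonneg
  obtain ⟨s, hspos, hsle, hsp, hsm⟩ := entry_exists (hTG.pieces_closed p hp) hd hγg
    (by rw [hγ0']; exact hx) (by rw [hγd]; exact hz)
  have hEq : γ0 s0 = γ s := entry_unique hTG hp (x := x) (le_of_lt hs0pos) (le_of_lt hspos)
    (geo_mono hγ0g (le_refl 0) hs0le) (geo_mono hγg (le_refl 0) hsle)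
    hγ00 hγ0' hs0p hsp hs0m hsm
  have hxe : dist x (γ s) = s := by
    rw [← hγ0', hγg 0 ⟨le_refl 0, hd⟩ s ⟨le_of_lt hspos, hsle⟩,
      abs_of_nonpos (by linarith)]; ring
  have hez : dist (γ s) z = dist x z - s := by
    have h5 : dist (γ s) (γ (dist x z)) = dist x z - s := by
      rw [hγg s ⟨le_of_lt hspos, hsle⟩ (dist x z) ⟨hd, le_refl _⟩,
        abs_of_nonpos (by linarith)]; ring
    rw [hγd] at h5; exact h5
  rw [hEq, hxe, hez]; ring

theorem gate_ray {p : Set F} {x e : F} (hgate : IsGate p x e)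
    {γ : ℝ → F} {A : ℝ} (hA : A = dist x e) (hg : IsGeodesicOn γ 0 A)
    (h0 : γ 0 = x) (h1 : γ A = e) :
    ∀ t ∈ Set.Ico 0 A, γ t ∉ p := by
  intro t ht htp
  have hA0 : 0 ≤ A := le_trans ht.1 (le_of_lt ht.2)
  have hxt : dist x (γ t) = t := by
    rw [← h0, hg 0 ⟨le_refl 0, hA0⟩ t ⟨ht.1, le_of_lt ht.2⟩, abs_of_nonpos (by linarith [ht.1])]
    ring
  have hte : dist (γ t) e = A - t := by
    rw [← h1, hg t ⟨ht.1, le_of_lt ht.2⟩ A ⟨hA0, le_refl A⟩, abs_of_nonpos (by linarith [ht.2])]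
    ring
  have hg2 := hgate.2 (γ t) htp
  rw [hxt, ← hA, dist_comm e (γ t), hte] at hg2
  linarith [ht.2]

theorem gate_const (hF : GeodesicSpace F) {P : Set (Set F)} (hTG : IsTreeGraded P)
    {p : Set F} (hp : p ∈ P) {x y ex ey : F} (hgx : IsGate p x ex) (hgy : IsGate p y ey)
    {h : ℝ → F} {l : ℝ} (hl : 0 ≤ l) (hh : IsGeodesicOn h 0 l) (hh0 : h 0 = x) (hhl : h l = y)
    (havoid : ∀ t ∈ Set.Icc 0 l, h t ∉ p) : ex = ey := by
  have hx : x ∉ p := hh0 ▸ havoid 0 ⟨le_refl 0, hl⟩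
  have hy : y ∉ p := hhl ▸ havoid l ⟨hl, le_refl l⟩
  by_cases hxy : x = y
  · exact gate_unique hgx (by rw [hxy]; exact hgy)
  by_contra hne
  set A := dist x ex with hAdef
  set B := dist y ey with hBdef
  set D := dist ex ey with hDdef
  have hApos : 0 < A := dist_pos.2 (fun hc => hx (hc ▸ hgx.1))
  have hBpos : 0 < B := dist_pos.2 (fun hc => hy (hc ▸ hgy.1))
  have hDpos : 0 < D := dist_pos.2 hne
  obtain ⟨γ1, hγ10, hγ1A, hγ1g⟩ := hF x ex
  obtain ⟨γ2, hγ20, hγ2B, hγ2g⟩ := hF y ey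
  have hray1 : ∀ t ∈ Set.Ico 0 A, γ1 t ∉ p := gate_ray hgx rfl hγ1g hγ10 hγ1A
  have hray2 : ∀ t ∈ Set.Ico 0 B, γ2 t ∉ p := gate_ray hgy rfl hγ2g hγ20 hγ2B
  obtain ⟨g, hg0, hgD, hggeo, hgsub⟩ := hTG.pieces_geodesic p hp ex hgx.1 ey hgy.1
  have hdistk : dist (γ1 0) (g D) = A + D := by rw [hγ10, hgD]; exact hgx.2 ey hgy.1
  set k : ℝ → F := fun r => if r ≤ A then γ1 r else g (r - A) with hkdef
  have hkgeo : IsGeodesicOn k 0 (A + D) :=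
    geo_concat (le_of_lt hApos) (le_of_lt hDpos) hγ1g hggeo (hγ1A.trans hg0.symm) hdistk
  have hk0 : k 0 = x := by rw [hkdef]; simp only [if_pos (le_of_lt hApos)]; exact hγ10
  have hkA : k A = ex := by rw [hkdef]; simp only [if_pos (le_refl A)]; exact hγ1A
  have hkend : k (A + D) = ey := by
    rw [hkdef]; simp only [if_neg (by linarith : ¬ A + D ≤ A)]
    rw [show A + D - A = D by ring, hgD]
  have hknotp : ∀ r ∈ Set.Ico 0 A, k r ∉ p := by
    intro r hr
    rw [hkdef]; simp only [if_pos (le_of_lt hr.2)]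
    exact hray1 r hr
  have hkp : ∀ r ∈ Set.Icc A (A + D), k r ∈ p := by
    intro r hr
    by_cases hrA : r ≤ A
    · have : r = A := le_antisymm hrA hr.1
      rw [this, hkA]; exact hgx.1
    · rw [hkdef]; simp only [if_neg hrA]
      exact hgsub ⟨r - A, ⟨by linarith [hr.1, not_le.1 hrA], by linarith [hr.2]⟩, rfl⟩
  have hkinj : Set.InjOn k (Set.Icc 0 (A + D)) := geo_injOn hkgeo
  have hkcont : ContinuousOn k (Set.Icc 0 (A + D)) := geo_continuousOn hkgeo
  -- Step 1 : trim h against γ2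
  have hhcont := geo_continuousOn hh
  have hhimgC : IsCompact (h '' Set.Icc 0 l) := isCompact_Icc.image_of_continuousOn hhcont
  set I1 := Set.Icc 0 B ∩ γ2 ⁻¹' (h '' Set.Icc 0 l) with hI1def
  have hI1c : IsClosed I1 :=
    (geo_continuousOn hγ2g).preimage_isClosed_of_isClosed isClosed_Icc hhimgC.isClosed
  have hI10 : (0:ℝ) ∈ I1 :=
    ⟨⟨le_refl 0, le_of_lt hBpos⟩, ⟨l, ⟨hl, le_refl l⟩, by rw [hhl, hγ20]⟩⟩
  have hI1bdd : BddAbove I1 := ⟨B, fun t ht => ht.1.2⟩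
  have hu1mem := hI1c.csSup_mem ⟨0, hI10⟩ hI1bdd
  set u1 := sSup I1 with hu1def
  obtain ⟨τ, hτ, hτeq⟩ := hu1mem.2
  have hnotin_himg : ∀ w ∈ h '' Set.Icc 0 l, w ∉ p := by
    rintro w ⟨t, ht, rfl⟩; exact havoid t ht
  have hu1B : u1 < B := by
    rcases lt_or_eq_of_le hu1mem.1.2 with hlt | heq
    · exact hlt
    · exfalso
      have : γ2 u1 ∈ p := by rw [heq, hγ2B]; exact hgy.1
      exact hnotin_himg _ hu1mem.2 this
  have fact1 : ∀ u, u1 < u → u ≤ B → γ2 u ∉ h '' Set.Icc 0 l := by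
    intro u hu huB hmem
    have : u ∈ I1 := ⟨⟨by linarith [hu1mem.1.1], huB⟩, hmem⟩
    linarith [le_csSup hI1bdd this]
  -- Step 2 : trim γ1 (initial part of k) against the other two
  set W1 := h '' Set.Icc 0 τ with hW1def
  set W2 := γ2 '' Set.Icc u1 B with hW2def
  have hW1C : IsCompact W1 := isCompact_Icc.image_of_continuousOn
    (hhcont.mono (Set.Icc_subset_Icc (le_refl 0) hτ.2))
  have hW2C : IsCompact W2 := isCompact_Icc.image_of_continuousOn
    ((geo_continuousOn hγ2g).mono (Set.Icc_subset_Icc hu1mem.1.1 (le_refl B)))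
  have hW1p : ∀ w ∈ W1, w ∉ p := by
    rintro w ⟨t, ht, rfl⟩
    exact havoid t ⟨ht.1, le_trans ht.2 hτ.2⟩
  have hW2p : ∀ w ∈ W2, w ∈ p → w = ey := by
    rintro w ⟨u, hu, rfl⟩ hwp
    rcases lt_or_eq_of_le hu.2 with hlt | heq
    · exact absurd hwp (hray2 u ⟨le_trans hu1mem.1.1 hu.1, hlt⟩)
    · rw [heq, hγ2B]
  set I2 := Set.Icc 0 A ∩ k ⁻¹' (W1 ∪ W2) with hI2def
  have hI2c : IsClosed I2 :=
    (hkcont.mono (Set.Icc_subset_Icc (le_refl 0) (by linarith))).preimage_isClosed_of_isClosed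
      isClosed_Icc (hW1C.union hW2C).isClosed
  have hI20 : (0:ℝ) ∈ I2 := by
    refine ⟨⟨le_refl 0, le_of_lt hApos⟩, Or.inl ⟨0, ⟨le_refl 0, hτ.1⟩, by rw [hh0, hk0]⟩⟩
  have hI2bdd : BddAbove I2 := ⟨A, fun t ht => ht.1.2⟩
  have hrsmem := hI2c.csSup_mem ⟨0, hI20⟩ hI2bdd
  set rs := sSup I2 with hrsdef
  have hexW : k A ∉ W1 ∪ W2 := by
    rintro (hW | hW)
    · exact hW1p _ hW (hkA ▸ hgx.1)
    · have := hW2p _ hW (hkA ▸ hgx.1)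
      rw [hkA] at this
      exact hne this
  have hrsA : rs < A := by
    rcases lt_or_eq_of_le hrsmem.1.2 with hlt | heq
    · exact hlt
    · exact absurd (heq ▸ hrsmem.2) hexW
  have hm'notp : k rs ∉ p := hknotp rs ⟨hrsmem.1.1, hrsA⟩
  have fact2 : ∀ r, rs < r → r < A + D → k r ∉ W1 ∪ W2 := by
    intro r h1 h2 hmem
    by_cases hrA : r ≤ A
    · have : r ∈ I2 := ⟨⟨by linarith [hrsmem.1.1], hrA⟩, hmem⟩
      linarith [le_csSup hI2bdd this]
    · push_neg at hrA
      have hkrp : k r ∈ p := hkp r ⟨le_of_lt hrA, le_of_lt h2⟩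
      rcases hmem with hW | hW
      · exact hW1p _ hW hkrp
      · have := hW2p _ hW hkrp
        rw [← hkend] at this
        have := hkinj ⟨by linarith [hrsmem.1.1], le_of_lt h2⟩
          ⟨by linarith, le_refl _⟩ this
        linarith
  -- final contradiction via the triangle
  have hqp_contra : ∀ q ∈ P, ex ∈ q → ey ∈ q → k rs ∈ q → False := by
    intro q hq hexq heyq hmq
    have hpq : p = q := by
      by_contra hpq
      exact hne (hTG.T1 p hp q hq hpq ⟨hgx.1, hexq⟩ ⟨hgy.1, heyq⟩)
    exact hm'notp (hpq ▸ hmq)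
  rcases hrsmem.2 with hW | hW
  · -- case (i) : k rs ∈ W1, i.e. on h
    obtain ⟨σ, hσ, hσeq⟩ := hW
    have key := tri hTG (γ1 := fun r => h (σ + r)) (γ2 := fun r => γ2 (u1 + r))
      (γ3 := fun r => k (A + D - r))
      (a1 := τ - σ) (a2 := B - u1) (a3 := A + D - rs)
      (by linarith [hσ.2]) (by linarith) (by linarith)
      (by linarith [hσ.2])
      (geo_sub_forward hh hσ.1 hτ.2)
      (geo_sub_forward hγ2g hu1mem.1.1 (le_refl B))
      (geo_sub_rev hkgeo hrsmem.1.1 (le_refl (A + D)))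
      (by show h (σ + (τ - σ)) = γ2 (u1 + 0)
          rw [show σ + (τ - σ) = τ by ring, add_zero, hτeq])
      (by show γ2 (u1 + (B - u1)) = k (A + D - 0)
          rw [show u1 + (B - u1) = B by ring, sub_zero, hγ2B, hkend])
      (by show k (A + D - (A + D - rs)) = h (σ + 0)
          rw [show A + D - (A + D - rs) = rs by ring, add_zero, hσeq])
      ?_ ?_ ?_
    · obtain ⟨q, hq, hsub⟩ := key
      refine hqp_contra q hq ?_ ?_ ?_
      · refine hsub (Or.inr ⟨D, ⟨le_of_lt hDpos, by linarith⟩, ?_⟩)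
        show k (A + D - D) = ex
        rw [show A + D - D = A by ring, hkA]
      · refine hsub (Or.inl (Or.inr ⟨B - u1, ⟨by linarith, le_refl _⟩, ?_⟩))
        show γ2 (u1 + (B - u1)) = ey
        rw [show u1 + (B - u1) = B by ring, hγ2B]
      · refine hsub (Or.inr ⟨A + D - rs, ⟨by linarith, le_refl _⟩, ?_⟩)
        show k (A + D - (A + D - rs)) = k rs
        rw [show A + D - (A + D - rs) = rs by ring]
    · -- d12 : h-side vs γ2-side
      intro s hs t ht heq
      have heq' : h (σ + s) = γ2 (u1 + t) := heq
      by_cases ht0 : t = 0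
      · rw [ht0, add_zero, ← hτeq] at heq'
        have := geo_injOn hh ⟨by linarith [hσ.1, hs.1], by linarith [hs.2, hτ.2]⟩
          ⟨hτ.1, hτ.2⟩ heq'
        linarith [hs.2]
      · have htpos : 0 < t := lt_of_le_of_ne ht.1 (Ne.symm ht0)
        refine fact1 (u1 + t) (by linarith) (by linarith [ht.2]) ?_
        exact ⟨σ + s, ⟨by linarith [hσ.1, hs.1], by linarith [hs.2, hτ.2]⟩, heq'⟩
    · -- d13 : h-side vs k-side
      intro s hs t ht heq
      have heq' : h (σ + s) = k (A + D - t) := heq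
      by_cases ht0 : t = 0
      · rw [ht0, sub_zero, hkend] at heq'
        exact havoid (σ + s) ⟨by linarith [hσ.1, hs.1], by linarith [hs.2, hτ.2]⟩
          (heq' ▸ hgy.1)
      · have htpos : 0 < t := lt_of_le_of_ne ht.1 (Ne.symm ht0)
        refine fact2 (A + D - t) (by linarith [ht.2]) (by linarith) ?_
        exact Or.inl ⟨σ + s, ⟨by linarith [hσ.1, hs.1], by linarith [hs.2]⟩, heq'⟩
    · -- d23 : γ2-side vs k-side
      intro s hs t ht heq
      have heq' : γ2 (u1 + s) = k (A + D - t) := heq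
      by_cases ht0 : t = 0
      · rw [ht0, sub_zero, hkend, ← hγ2B] at heq'
        have := geo_injOn hγ2g ⟨by linarith [hu1mem.1.1, hs.1], by linarith [hs.2]⟩
          ⟨by linarith, le_refl B⟩ heq'
        linarith [hs.2]
      · have htpos : 0 < t := lt_of_le_of_ne ht.1 (Ne.symm ht0)
        refine fact2 (A + D - t) (by linarith [ht.2]) (by linarith) ?_
        exact Or.inr ⟨u1 + s, ⟨by linarith [hs.1], by linarith [hs.2]⟩, heq'⟩
  · -- case (ii) : k rs ∈ W2, i.e. on γ2
    obtain ⟨v, hv, hveq⟩ := hW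
    have hvB : v < B := by
      rcases lt_or_eq_of_le hv.2 with hlt | heq
      · exact hlt
      · exfalso
        rw [heq, hγ2B] at hveq
        exact hm'notp (hveq ▸ hgy.1)
    have hv0 : 0 ≤ v := le_trans hu1mem.1.1 hv.1
    have key := tri hTG (γ1 := fun r => γ2 (v + r)) (γ2 := fun r => k (A + D - r))
      (γ3 := fun _ => k rs)
      (a1 := B - v) (a2 := A + D - rs) (a3 := 0)
      (by linarith) (by linarith) (le_refl 0)
      (by linarith)
      (geo_sub_forward hγ2g hv0 (le_refl B))
      (geo_sub_rev hkgeo hrsmem.1.1 (le_refl (A + D)))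
      geo_const
      (by show γ2 (v + (B - v)) = k (A + D - 0)
          rw [show v + (B - v) = B by ring, sub_zero, hγ2B, hkend])
      (by show k (A + D - (A + D - rs)) = k rs
          rw [show A + D - (A + D - rs) = rs by ring])
      (by show k rs = γ2 (v + 0)
          rw [add_zero, hveq])
      ?_ ?_ ?_
    · obtain ⟨q, hq, hsub⟩ := key
      refine hqp_contra q hq ?_ ?_ ?_
      · refine hsub (Or.inl (Or.inr ⟨D, ⟨le_of_lt hDpos, by linarith⟩, ?_⟩))
        show k (A + D - D) = ex
        rw [show A + D - D = A by ring, hkA]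
      · refine hsub (Or.inl (Or.inl ⟨B - v, ⟨by linarith, le_refl _⟩, ?_⟩))
        show γ2 (v + (B - v)) = ey
        rw [show v + (B - v) = B by ring, hγ2B]
      · refine hsub (Or.inl (Or.inr ⟨A + D - rs, ⟨by linarith, le_refl _⟩, ?_⟩))
        show k (A + D - (A + D - rs)) = k rs
        rw [show A + D - (A + D - rs) = rs by ring]
    · -- d12 : γ2-side vs k-side
      intro s hs t ht heq
      have heq' : γ2 (v + s) = k (A + D - t) := heq
      by_cases ht0 : t = 0
      · rw [ht0, sub_zero, hkend, ← hγ2B] at heq'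
        have := geo_injOn hγ2g ⟨by linarith [hv0, hs.1], by linarith [hs.2]⟩
          ⟨by linarith, le_refl B⟩ heq'
        linarith [hs.2]
      · have htpos : 0 < t := lt_of_le_of_ne ht.1 (Ne.symm ht0)
        refine fact2 (A + D - t) (by linarith [ht.2]) (by linarith) ?_
        exact Or.inr ⟨v + s, ⟨by linarith [hv.1, hs.1], by linarith [hs.2]⟩, heq'⟩
    · intro s hs t ht
      exact absurd (lt_of_le_of_lt ht.1 ht.2) (lt_irrefl 0)
    · intro s hs t ht
      exact absurd (lt_of_le_of_lt ht.1 ht.2) (lt_irrefl 0)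

theorem no_escape (hF : GeodesicSpace F) {P : Set (Set F)} (hTG : IsTreeGraded P)
    {p : Set F} (hp : p ∈ P) {c : ℝ → F} {u' v' : ℝ} (huv : u' < v')
    (hcont : ContinuousOn c (Set.Icc u' v'))
    (hu : c u' ∈ p) (hv : c v' ∈ p) (hcne : c u' ≠ c v')
    (hmid : ∀ s ∈ Set.Ioo u' v', c s ∉ p) : False := by
  have hpcl : IsClosed p := hTG.pieces_closed p hp
  have hpne : p.Nonempty := hTG.pieces_nonempty p hp
  -- local gate-agreement
  have hstep : ∀ s ∈ Set.Ioo u' v', ∃ ε, 0 < ε ∧ ∀ s' ∈ Set.Ioo u' v', |s' - s| < ε →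
      ∀ e e', IsGate p (c s) e → IsGate p (c s') e' → e = e' := by
    intro s hs
    have hscp : c s ∉ p := hmid s hs
    have hδ : 0 < Metric.infDist (c s) p := (hpcl.notMem_iff_infDist_pos hpne).1 hscp
    have hcw : ContinuousWithinAt c (Set.Icc u' v') s :=
      hcont s ⟨le_of_lt hs.1, le_of_lt hs.2⟩
    rw [Metric.continuousWithinAt_iff] at hcw
    obtain ⟨ε, hεpos, hε⟩ := hcw (Metric.infDist (c s) p) hδ
    refine ⟨ε, hεpos, ?_⟩
    intro s' hs' hdist e e' he he'
    have hd : dist (c s') (c s) < Metric.infDist (c s) p := by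
      refine hε ⟨le_of_lt hs'.1, le_of_lt hs'.2⟩ ?_
      rw [Real.dist_eq]; exact hdist
    obtain ⟨γ, hγ0, hγd, hγg⟩ := hF (c s) (c s')
    have havoid : ∀ t ∈ Set.Icc 0 (dist (c s) (c s')), γ t ∉ p := by
      intro t ht htp
      have h1 : Metric.infDist (c s) p ≤ dist (c s) (γ t) := Metric.infDist_le_dist_of_mem htp
      have h2 : dist (c s) (γ t) = t := by
        rw [← hγ0, hγg 0 ⟨le_refl 0, dist_nonneg⟩ t ht, abs_of_nonpos (by linarith [ht.1])]
        ring
      rw [dist_comm] at hd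
      linarith [ht.2]
    exact gate_const hF hTG hp he he' dist_nonneg hγg hγ0 hγd havoid
  choose! ε hεpos hε using hstep
  -- fix a base point and its gate
  set s₀ := (u' + v') / 2 with hs₀def
  have hs₀ : s₀ ∈ Set.Ioo u' v' := ⟨by rw [hs₀def]; linarith, by rw [hs₀def]; linarith⟩
  obtain ⟨E, hE⟩ := gate_exists hF hTG hp (hmid s₀ hs₀)
  -- every point of the open interval has gate E
  have hall : ∀ s ∈ Set.Ioo u' v', IsGate p (c s) E := by
    intro s hs
    by_contra hsV
    set U := {s | s ∈ Set.Ioo u' v' ∧ IsGate p (c s) E} with hU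
    set V := {s | s ∈ Set.Ioo u' v' ∧ ¬ IsGate p (c s) E} with hV
    set UU := ⋃ w ∈ U, Metric.ball w (ε w) with hUU
    set VV := ⋃ w ∈ V, Metric.ball w (ε w) with hVV
    have hUUopen : IsOpen UU := isOpen_biUnion (fun w _ => Metric.isOpen_ball)
    have hVVopen : IsOpen VV := isOpen_biUnion (fun w _ => Metric.isOpen_ball)
    have hcover : Set.Ioo u' v' ⊆ UU ∪ VV := by
      intro w hw
      by_cases hwE : IsGate p (c w) E
      · exact Or.inl (Set.mem_biUnion ⟨hw, hwE⟩ (Metric.mem_ball_self (hεpos w hw)))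
      · exact Or.inr (Set.mem_biUnion ⟨hw, hwE⟩ (Metric.mem_ball_self (hεpos w hw)))
    have hUne : (Set.Ioo u' v' ∩ UU).Nonempty :=
      ⟨s₀, hs₀, Set.mem_biUnion ⟨hs₀, hE⟩ (Metric.mem_ball_self (hεpos s₀ hs₀))⟩
    have hVne : (Set.Ioo u' v' ∩ VV).Nonempty :=
      ⟨s, hs, Set.mem_biUnion ⟨hs, hsV⟩ (Metric.mem_ball_self (hεpos s hs))⟩
    obtain ⟨w, hwIoo, hwUU, hwVV⟩ :=
      isPreconnected_Ioo (u := UU) (v := VV) hUUopen hVVopen hcover hUne hVne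
    obtain ⟨ea, hea⟩ := gate_exists hF hTG hp (hmid w hwIoo)
    simp only [hUU, hVV, Set.mem_iUnion, exists_prop] at hwUU hwVV
    obtain ⟨a', ha', hwa⟩ := hwUU
    obtain ⟨b', hb', hwb⟩ := hwVV
    rw [Metric.mem_ball, Real.dist_eq] at hwa hwb
    have h1 : E = ea := hε a' ha'.1 w hwIoo hwa E ea ha'.2 hea
    have h2 : ∀ eb, IsGate p (c b') eb → eb = ea := fun eb heb =>
      hε b' hb'.1 w hwIoo hwb eb ea heb hea
    obtain ⟨eb, heb⟩ := gate_exists hF hTG hp (hmid b' hb'.1)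
    have h3 : eb = E := (h2 eb heb).trans h1.symm
    exact hb'.2 (h3 ▸ heb)
  -- E equals both endpoints
  have hEend : ∀ w ∈ Set.Icc u' v', c w ∈ p → (nhdsWithin w (Set.Ioo u' v')).NeBot →
      E = c w := by
    intro w hw hwp hNB
    haveI := hNB
    have htd : Filter.Tendsto c (nhdsWithin w (Set.Ioo u' v')) (nhds (c w)) :=
      (hcont w hw).mono Set.Ioo_subset_Icc_self
    have htd0 : Filter.Tendsto (fun s => dist (c s) (c w))
        (nhdsWithin w (Set.Ioo u' v')) (nhds 0) := by
      have h4 := htd.dist (tendsto_const_nhds :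
        Filter.Tendsto (fun _ => c w) (nhdsWithin w (Set.Ioo u' v')) (nhds (c w)))
      rwa [dist_self] at h4
    have hle : dist E (c w) ≤ 0 := by
      refine ge_of_tendsto htd0 (Filter.eventually_of_mem self_mem_nhdsWithin
        (fun s hs => ?_))
      have h5 := (hall s hs).2 (c w) hwp
      linarith [dist_nonneg (x := c s) (y := E)]
    exact (dist_eq_zero.1 (le_antisymm hle dist_nonneg))
  have hNBu : (nhdsWithin u' (Set.Ioo u' v')).NeBot := by
    rw [nhdsWithin_Ioo_eq_nhdsGT huv]; infer_instance
  have hNBv : (nhdsWithin v' (Set.Ioo u' v')).NeBot := by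
    rw [nhdsWithin_Ioo_eq_nhdsLT huv]; infer_instance
  exact hcne ((hEend u' ⟨le_refl u', le_of_lt huv⟩ hu hNBu).symm.trans
    (hEend v' ⟨le_of_lt huv, le_refl v'⟩ hv hNBv))

end TG

/-- in a tree-graded space, every two distinct pieces intersect in at most one
point, and the intersection of any topological arc with a piece, if it has more than one
point, is a sub-arc. -/
theorem stmt_1 {F : Type*} [MetricSpace F] [CompleteSpace F] (hF : GeodesicSpace F)
    (P : Set (Set F)) (hTG : IsTreeGraded P) :
    (∀ p ∈ P, ∀ q ∈ P, p ≠ q → (p ∩ q).Subsingleton) ∧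
    (∀ (c : ℝ → F) (a b : ℝ), a ≤ b →
      ContinuousOn c (Set.Icc a b) → Set.InjOn c (Set.Icc a b) →
      ∀ p ∈ P, ¬ (c '' Set.Icc a b ∩ p).Subsingleton →
        ∃ s t : ℝ, a ≤ s ∧ s ≤ t ∧ t ≤ b ∧
          {u : ℝ | u ∈ Set.Icc a b ∧ c u ∈ p} = Set.Icc s t) := by
  refine ⟨hTG.T1, ?_⟩
  intro c a b hab hcont hinj p hp hns
  rw [Set.not_subsingleton_iff] at hns
  obtain ⟨w1, hw1, w2, hw2, hwne⟩ := hns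
  obtain ⟨r1, hr1, rfl⟩ := hw1.1
  set S := {u : ℝ | u ∈ Set.Icc a b ∧ c u ∈ p} with hSdef
  have hScl : IsClosed S := by
    have hEq : S = Set.Icc a b ∩ c ⁻¹' p := rfl
    rw [hEq]
    exact hcont.preimage_isClosed_of_isClosed isClosed_Icc (hTG.pieces_closed p hp)
  have hconv : ∀ t1 ∈ S, ∀ t2 ∈ S, ∀ t, t1 ≤ t → t ≤ t2 → t ∈ S := by
    intro t1 ht1 t2 ht2 t h1 h2
    have htab : t ∈ Set.Icc a b := ⟨le_trans ht1.1.1 h1, le_trans h2 ht2.1.2⟩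
    refine ⟨htab, ?_⟩
    by_contra hcp
    have ht1t : t1 < t := lt_of_le_of_ne h1 (fun hc => hcp (by rw [← hc]; exact ht1.2))
    have htt2 : t < t2 := lt_of_le_of_ne h2 (fun hc => hcp (by rw [hc]; exact ht2.2))
    set S1 := Set.Icc t1 t ∩ c ⁻¹' p with hS1def
    have hS1cl : IsClosed S1 :=
      (hcont.mono (Set.Icc_subset_Icc ht1.1.1 htab.2)).preimage_isClosed_of_isClosed
        isClosed_Icc (hTG.pieces_closed p hp)
    have hS1ne : S1.Nonempty := ⟨t1, ⟨le_refl t1, h1⟩, ht1.2⟩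
    have hS1bdd : BddAbove S1 := ⟨t, fun u hu => hu.1.2⟩
    have huumem := hS1cl.csSup_mem hS1ne hS1bdd
    set uu := sSup S1 with huudef
    have huut : uu < t := lt_of_le_of_ne huumem.1.2 (fun hc => hcp (by rw [← hc]; exact huumem.2))
    set S2 := Set.Icc t t2 ∩ c ⁻¹' p with hS2def
    have hS2cl : IsClosed S2 :=
      (hcont.mono (Set.Icc_subset_Icc htab.1 ht2.1.2)).preimage_isClosed_of_isClosed
        isClosed_Icc (hTG.pieces_closed p hp)
    have hS2ne : S2.Nonempty := ⟨t2, ⟨h2, le_refl t2⟩, ht2.2⟩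
    have hS2bdd : BddBelow S2 := ⟨t, fun u hu => hu.1.1⟩
    have hvvmem := hS2cl.csInf_mem hS2ne hS2bdd
    set vv := sInf S2 with hvvdef
    have htvv : t < vv := lt_of_le_of_ne hvvmem.1.1 (fun hc => hcp (by rw [hc]; exact hvvmem.2))
    have havoid : ∀ s ∈ Set.Ioo uu vv, c s ∉ p := by
      intro s hs hsp
      rcases le_total s t with hle | hle
      · have hmem : s ∈ S1 := ⟨⟨le_trans huumem.1.1 (le_of_lt hs.1), hle⟩, hsp⟩
        linarith [le_csSup hS1bdd hmem, hs.1]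
      · have hmem : s ∈ S2 := ⟨⟨hle, le_trans (le_of_lt hs.2) hvvmem.1.2⟩, hsp⟩
        linarith [csInf_le hS2bdd hmem, hs.2]
    have huuab : uu ∈ Set.Icc a b := ⟨le_trans ht1.1.1 huumem.1.1, le_trans huumem.1.2 htab.2⟩
    have hvvab : vv ∈ Set.Icc a b := ⟨le_trans htab.1 hvvmem.1.1, le_trans hvvmem.1.2 ht2.1.2⟩
    have hcne : c uu ≠ c vv := by
      intro hc
      have heq := hinj huuab hvvab hc
      linarith
    exact TG.no_escape hF hTG hp (lt_trans huut htvv)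
      (hcont.mono (Set.Icc_subset_Icc huuab.1 hvvab.2)) huumem.2 hvvmem.2 hcne havoid
  have hSne : S.Nonempty := ⟨r1, hr1, hw1.2⟩
  have hbddA : BddAbove S := ⟨b, fun u hu => hu.1.2⟩
  have hbddB : BddBelow S := ⟨a, fun u hu => hu.1.1⟩
  have hsup := hScl.csSup_mem hSne hbddA
  have hinf := hScl.csInf_mem hSne hbddB
  refine ⟨sInf S, sSup S, hinf.1.1, csInf_le_csSup hSne hbddB hbddA, hsup.1.2, ?_⟩
  ext u
  constructor
  · intro hu
    exact ⟨csInf_le hbddB hu, le_csSup hbddA hu⟩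
  · intro hu
    exact hconv (sInf S) hinf (sSup S) hsup u hu.1 hu.2
end

section
/- Let F be a tree-graded space and let Δ = pqr be a geodesic triangle in F with sides p, q, r. Then the sides can be decomposed as p = p1 p2 p3, q = q1 q2 q3, r = r1 r2 r3 (some subpaths possibly trivial), such that the endpoints match up ((p1)+ = (r3)−, (p3)− = (q1)+, (q3)− = (r1)+) and the cycle p2 q2 r2 either is a single point or is contained in a single piece of F. -/
/-- decomposition of geodesic triangles in tree-graded spaces.  The sides
`p, q, r` of a geodesic triangle decompose as `p = p₁p₂p₃`, `q = q₁q₂q₃`, `r = r₁r₂r₃`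
with matching endpoints, and the middle cycle `p₂q₂r₂` is either a single point or is
contained in a single piece. -/
theorem stmt_2 {F : Type*} [MetricSpace F] [CompleteSpace F] (hF : GeodesicSpace F)
    (P : Set (Set F)) (hTG : IsTreeGraded P)
    (p q r : ℝ → F) (Lp Lq Lr : ℝ) (hLp : 0 ≤ Lp) (hLq : 0 ≤ Lq) (hLr : 0 ≤ Lr)
    (hp : IsGeodesicOn p 0 Lp) (hq : IsGeodesicOn q 0 Lq) (hr : IsGeodesicOn r 0 Lr)
    (hpq : p Lp = q 0) (hqr : q Lq = r 0) (hrp : r Lr = p 0) :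
    ∃ a₁ a₂ b₁ b₂ c₁ c₂ : ℝ,
      0 ≤ a₁ ∧ a₁ ≤ a₂ ∧ a₂ ≤ Lp ∧
      0 ≤ b₁ ∧ b₁ ≤ b₂ ∧ b₂ ≤ Lq ∧
      0 ≤ c₁ ∧ c₁ ≤ c₂ ∧ c₂ ≤ Lr ∧
      p a₂ = q b₁ ∧ q b₂ = r c₁ ∧ r c₂ = p a₁ ∧
      ((a₁ = a₂ ∧ b₁ = b₂ ∧ c₁ = c₂) ∨
        ∃ pc ∈ P, p '' Set.Icc a₁ a₂ ∪ q '' Set.Icc b₁ b₂ ∪ r '' Set.Icc c₁ c₂ ⊆ pc) := by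
  classical
  -- clamp helpers
  have clampMem : ∀ (L t : ℝ), 0 ≤ L → max 0 (min t L) ∈ Set.Icc 0 L := fun L t hL =>
    ⟨le_max_left _ _, max_le hL (min_le_right _ _)⟩
  have clampEq : ∀ (L t : ℝ), t ∈ Set.Icc 0 L → max 0 (min t L) = t := fun L t ht => by
    rw [min_eq_left ht.2, max_eq_right ht.1]
  have clampLip : ∀ (L s t : ℝ), |max 0 (min s L) - max 0 (min t L)| ≤ |s - t| := by
    intro L s t
    rw [max_comm 0 (min s L), max_comm 0 (min t L)]
    refine (abs_max_sub_max_le_abs _ _ _).trans ?_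
    refine (abs_min_sub_min_le_max s L t L).trans ?_
    simp
  have lip : ∀ (g : ℝ → F) (L : ℝ), 0 ≤ L → IsGeodesicOn g 0 L →
      LipschitzWith 1 (fun t => g (max 0 (min t L))) := by
    intro g L hL hg
    refine LipschitzWith.of_dist_le_mul fun s t => ?_
    rw [hg _ (clampMem L s hL) _ (clampMem L t hL)]
    simpa [Real.dist_eq] using clampLip L s t
  set p' : ℝ → F := fun t => p (max 0 (min t Lp)) with hp'def
  set q' : ℝ → F := fun t => q (max 0 (min t Lq)) with hq'def
  set r' : ℝ → F := fun t => r (max 0 (min t Lr)) with hr'def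
  have cp : Continuous p' := (lip p Lp hLp hp).continuous
  have cq : Continuous q' := (lip q Lq hLq hq).continuous
  have cr : Continuous r' := (lip r Lr hLr hr).continuous
  have pe : ∀ t ∈ Set.Icc (0:ℝ) Lp, p' t = p t := fun t ht => by
    show p (max 0 (min t Lp)) = p t; rw [clampEq Lp t ht]
  have qe : ∀ t ∈ Set.Icc (0:ℝ) Lq, q' t = q t := fun t ht => by
    show q (max 0 (min t Lq)) = q t; rw [clampEq Lq t ht]
  have re : ∀ t ∈ Set.Icc (0:ℝ) Lr, r' t = r t := fun t ht => by
    show r (max 0 (min t Lr)) = r t; rw [clampEq Lr t ht]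
  -- the configuration set
  set S : Set (ℝ × ℝ × ℝ × ℝ × ℝ × ℝ) :=
    {x | (0 ≤ x.1 ∧ x.1 ≤ x.2.1 ∧ x.2.1 ≤ Lp) ∧
         (0 ≤ x.2.2.1 ∧ x.2.2.1 ≤ x.2.2.2.1 ∧ x.2.2.2.1 ≤ Lq) ∧
         (0 ≤ x.2.2.2.2.1 ∧ x.2.2.2.2.1 ≤ x.2.2.2.2.2 ∧ x.2.2.2.2.2 ≤ Lr) ∧
         p' x.2.1 = q' x.2.2.1 ∧ q' x.2.2.2.1 = r' x.2.2.2.2.1 ∧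
         r' x.2.2.2.2.2 = p' x.1} with hSdef
  have hSclosed : IsClosed S := by
    rw [hSdef]
    simp only [Set.setOf_and]
    repeat' apply IsClosed.inter
    all_goals
      first
        | exact isClosed_le (by fun_prop) (by fun_prop)
        | exact isClosed_eq (cp.comp (by fun_prop)) (cq.comp (by fun_prop))
        | exact isClosed_eq (cq.comp (by fun_prop)) (cr.comp (by fun_prop))
        | exact isClosed_eq (cr.comp (by fun_prop)) (cp.comp (by fun_prop))
  have hSbdd : Bornology.IsBounded S := by
    refine Bornology.IsBounded.subset
      (((Metric.isBounded_Icc (0:ℝ) Lp).prod ((Metric.isBounded_Icc (0:ℝ) Lp).prod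
        ((Metric.isBounded_Icc (0:ℝ) Lq).prod ((Metric.isBounded_Icc (0:ℝ) Lq).prod
        ((Metric.isBounded_Icc (0:ℝ) Lr).prod (Metric.isBounded_Icc (0:ℝ) Lr))))))) ?_
    rintro x ⟨⟨h1, h2, h3⟩, ⟨h4, h5, h6⟩, ⟨h7, h8, h9⟩, -⟩
    simp only [Set.mem_prod, Set.mem_Icc]
    exact ⟨⟨h1, h2.trans h3⟩, ⟨h1.trans h2, h3⟩, ⟨h4, h5.trans h6⟩, ⟨h4.trans h5, h6⟩,
      ⟨h7, h8.trans h9⟩, h7.trans h8, h9⟩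
  have hx0 : ((0:ℝ), Lp, (0:ℝ), Lq, (0:ℝ), Lr) ∈ S := by
    refine ⟨⟨le_rfl, hLp, le_rfl⟩, ⟨le_rfl, hLq, le_rfl⟩, ⟨le_rfl, hLr, le_rfl⟩, ?_, ?_, ?_⟩
    · rw [pe Lp ⟨hLp, le_rfl⟩, qe 0 ⟨le_rfl, hLq⟩]; exact hpq
    · rw [qe Lq ⟨hLq, le_rfl⟩, re 0 ⟨le_rfl, hLr⟩]; exact hqr
    · rw [re Lr ⟨hLr, le_rfl⟩, pe 0 ⟨le_rfl, hLp⟩]; exact hrp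
  obtain ⟨⟨a₁, a₂, b₁, b₂, c₁, c₂⟩, hmS, hmin⟩ :=
    (Metric.isCompact_of_isClosed_isBounded hSclosed hSbdd).exists_isMinOn ⟨_, hx0⟩
      (Continuous.continuousOn (f := fun x : ℝ × ℝ × ℝ × ℝ × ℝ × ℝ =>
        (x.2.1 - x.1) + (x.2.2.2.1 - x.2.2.1) + (x.2.2.2.2.2 - x.2.2.2.2.1)) (by fun_prop))
  obtain ⟨⟨ha1, ha12, ha2⟩, ⟨hb1, hb12, hb2⟩, ⟨hc1, hc12, hc2⟩, hE1, hE2, hE3⟩ := hmS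
  have fmin := isMinOn_iff.mp hmin
  simp only at fmin hE1 hE2 hE3
  have ma2 : a₂ ∈ Set.Icc (0:ℝ) Lp := ⟨ha1.trans ha12, ha2⟩
  have ma1 : a₁ ∈ Set.Icc (0:ℝ) Lp := ⟨ha1, ha12.trans ha2⟩
  have mb1 : b₁ ∈ Set.Icc (0:ℝ) Lq := ⟨hb1, hb12.trans hb2⟩
  have mb2 : b₂ ∈ Set.Icc (0:ℝ) Lq := ⟨hb1.trans hb12, hb2⟩
  have mc1 : c₁ ∈ Set.Icc (0:ℝ) Lr := ⟨hc1, hc12.trans hc2⟩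
  have mc2 : c₂ ∈ Set.Icc (0:ℝ) Lr := ⟨hc1.trans hc12, hc2⟩
  have e1 : p a₂ = q b₁ := by rw [← pe a₂ ma2, ← qe b₁ mb1]; exact hE1
  have e2 : q b₂ = r c₁ := by rw [← qe b₂ mb2, ← re c₁ mc1]; exact hE2
  have e3 : r c₂ = p a₁ := by rw [← re c₂ mc2, ← pe a₁ ma1]; exact hE3
  -- no-crossing lemmas from minimality
  have ncPQ : ∀ t ∈ Set.Icc a₁ a₂, ∀ s ∈ Set.Icc b₁ b₂, p t = q s → t = a₂ ∧ s = b₁ := by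
    intro t ht s hs hts
    have hmt : t ∈ Set.Icc (0:ℝ) Lp := ⟨ha1.trans ht.1, ht.2.trans ha2⟩
    have hms : s ∈ Set.Icc (0:ℝ) Lq := ⟨hb1.trans hs.1, hs.2.trans hb2⟩
    have hx : (a₁, t, s, b₂, c₁, c₂) ∈ S := by
      refine ⟨⟨ha1, ht.1, hmt.2⟩, ⟨hms.1, hs.2, hb2⟩, ⟨hc1, hc12, hc2⟩, ?_, hE2, hE3⟩
      show p' t = q' s
      rw [pe t hmt, qe s hms]; exact hts
    have h := fmin _ hx
    simp only at h
    exact ⟨by linarith [ht.2, hs.1], by linarith [ht.2, hs.1]⟩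
  have ncQR : ∀ s ∈ Set.Icc b₁ b₂, ∀ w ∈ Set.Icc c₁ c₂, q s = r w → s = b₂ ∧ w = c₁ := by
    intro s hs w hw hsw
    have hms : s ∈ Set.Icc (0:ℝ) Lq := ⟨hb1.trans hs.1, hs.2.trans hb2⟩
    have hmw : w ∈ Set.Icc (0:ℝ) Lr := ⟨hc1.trans hw.1, hw.2.trans hc2⟩
    have hx : (a₁, a₂, b₁, s, w, c₂) ∈ S := by
      refine ⟨⟨ha1, ha12, ha2⟩, ⟨hb1, hs.1, hms.2⟩, ⟨hmw.1, hw.2, hc2⟩, hE1, ?_, hE3⟩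
      show q' s = r' w
      rw [qe s hms, re w hmw]; exact hsw
    have h := fmin _ hx
    simp only at h
    exact ⟨by linarith [hs.2, hw.1], by linarith [hs.2, hw.1]⟩
  have ncRP : ∀ w ∈ Set.Icc c₁ c₂, ∀ t ∈ Set.Icc a₁ a₂, r w = p t → w = c₂ ∧ t = a₁ := by
    intro w hw t ht hwt
    have hmw : w ∈ Set.Icc (0:ℝ) Lr := ⟨hc1.trans hw.1, hw.2.trans hc2⟩
    have hmt : t ∈ Set.Icc (0:ℝ) Lp := ⟨ha1.trans ht.1, ht.2.trans ha2⟩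
    have hx : (t, a₂, b₁, b₂, c₁, w) ∈ S := by
      refine ⟨⟨hmt.1, ht.2, ha2⟩, ⟨hb1, hb12, hb2⟩, ⟨hc1, hw.1, hmw.2⟩, hE1, hE2, ?_⟩
      show r' w = p' t
      rw [re w hmw, pe t hmt]; exact hwt
    have h := fmin _ hx
    simp only at h
    exact ⟨by linarith [hw.2, ht.1], by linarith [hw.2, ht.1]⟩
  -- degenerate or not
  by_cases hdeg : a₁ = a₂ ∧ b₁ = b₂ ∧ c₁ = c₂
  · exact ⟨a₁, a₂, b₁, b₂, c₁, c₂, ha1, ha12, ha2, hb1, hb12, hb2, hc1, hc12, hc2,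
      e1, e2, e3, Or.inl hdeg⟩
  set A := a₂ - a₁ with hA
  set B := b₂ - b₁ with hB
  set C := c₂ - c₁ with hC
  have hA0 : 0 ≤ A := by simp [hA]; linarith
  have hB0 : 0 ≤ B := by simp [hB]; linarith
  have hC0 : 0 ≤ C := by simp [hC]; linarith
  set L : ℝ := A + B + C with hL
  have hLpos : 0 < L := by
    rcases lt_or_eq_of_le (by linarith : (0:ℝ) ≤ L) with h | h
    · exact h
    · exact absurd ⟨by linarith [hA0, hB0, hC0], by linarith [hA0, hB0, hC0],
        by linarith [hA0, hB0, hC0]⟩ hdeg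
  set γ : ℝ → F := fun u =>
    if u ≤ A then p (a₁ + u) else if u ≤ A + B then q (b₁ + u - A) else r (c₁ + u - A - B)
    with hγdef
  have hγ1 : ∀ u ∈ Set.Icc (0:ℝ) A, γ u = p (a₁ + u) := by
    intro u hu
    show (if u ≤ A then _ else _) = _
    rw [if_pos hu.2]
  have hγ2 : ∀ u ∈ Set.Icc A (A + B), γ u = q (b₁ + u - A) := by
    intro u hu
    by_cases h : u ≤ A
    · have huA : u = A := le_antisymm h hu.1
      rw [huA, hγ1 A ⟨hA0, le_rfl⟩, show a₁ + A = a₂ by rw [hA]; ring,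
        show b₁ + A - A = b₁ by ring]
      exact e1
    · show (if u ≤ A then _ else _) = _
      rw [if_neg h, if_pos hu.2]
  have hγ3 : ∀ u ∈ Set.Icc (A + B) L, γ u = r (c₁ + u - A - B) := by
    intro u hu
    by_cases h2 : u ≤ A + B
    · have huAB : u = A + B := le_antisymm h2 hu.1
      subst huAB
      rw [hγ2 (A + B) ⟨by linarith, le_rfl⟩,
        show b₁ + (A + B) - A = b₂ by rw [hB]; ring,
        show c₁ + (A + B) - A - B = c₁ by ring]
      exact e2
    · have h1 : ¬ u ≤ A := by push_neg; push_neg at h2; linarith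
      show (if u ≤ A then _ else _) = _
      rw [if_neg h1, if_neg h2]
  -- injectivity of each geodesic
  have injP : ∀ x ∈ Set.Icc (0:ℝ) Lp, ∀ y ∈ Set.Icc (0:ℝ) Lp, p x = p y → x = y := by
    intro x hx y hy h
    have := hp x hx y hy
    rw [h, dist_self] at this
    have := abs_eq_zero.mp this.symm
    linarith
  have injQ : ∀ x ∈ Set.Icc (0:ℝ) Lq, ∀ y ∈ Set.Icc (0:ℝ) Lq, q x = q y → x = y := by
    intro x hx y hy h
    have := hq x hx y hy
    rw [h, dist_self] at this
    have := abs_eq_zero.mp this.symm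
    linarith
  have injR : ∀ x ∈ Set.Icc (0:ℝ) Lr, ∀ y ∈ Set.Icc (0:ℝ) Lr, r x = r y → x = y := by
    intro x hx y hy h
    have := hr x hx y hy
    rw [h, dist_self] at this
    have := abs_eq_zero.mp this.symm
    linarith
  have tri : SimpleGeodesicTriangle γ A (A + B) L := by
    refine ⟨hLpos, hA0, by linarith, by linarith, ?_, ?_, ?_, ?_, ?_⟩
    · intro s hs t ht
      rw [hγ1 s hs, hγ1 t ht,
        hp (a₁ + s) ⟨by linarith [hs.1], by linarith [hs.2]⟩
          (a₁ + t) ⟨by linarith [ht.1], by linarith [ht.2]⟩,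
        show a₁ + s - (a₁ + t) = s - t by ring]
    · intro s hs t ht
      rw [hγ2 s hs, hγ2 t ht,
        hq (b₁ + s - A) ⟨by linarith [hs.1], by linarith [hs.2]⟩
          (b₁ + t - A) ⟨by linarith [ht.1], by linarith [ht.2]⟩,
        show b₁ + s - A - (b₁ + t - A) = s - t by ring]
    · intro s hs t ht
      rw [hγ3 s hs, hγ3 t ht,
        hr (c₁ + s - A - B) ⟨by linarith [hs.1], by linarith [hs.2]⟩
          (c₁ + t - A - B) ⟨by linarith [ht.1], by linarith [ht.2]⟩,
        show c₁ + s - A - B - (c₁ + t - A - B) = s - t by ring]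
    · rw [hγ1 0 ⟨le_rfl, hA0⟩, hγ3 L ⟨by linarith, le_rfl⟩,
        show a₁ + 0 = a₁ by ring, show c₁ + L - A - B = c₂ by rw [hL, hC]; ring]
      exact e3.symm
    · intro s hs t ht hst
      have hsplit : ∀ u ∈ Set.Ico (0:ℝ) L,
          u ∈ Set.Icc (0:ℝ) A ∨ u ∈ Set.Icc A (A + B) ∨ u ∈ Set.Icc (A + B) L := by
        intro u hu
        rcases le_total u A with h | h
        · exact Or.inl ⟨hu.1, h⟩
        rcases le_total u (A + B) with h' | h'
        · exact Or.inr (Or.inl ⟨h, h'⟩)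
        · exact Or.inr (Or.inr ⟨h', le_of_lt hu.2⟩)
      have mP : ∀ u ∈ Set.Icc (0:ℝ) A, a₁ + u ∈ Set.Icc a₁ a₂ :=
        fun u hu => ⟨by linarith [hu.1], by linarith [hu.2]⟩
      have mQ : ∀ u ∈ Set.Icc A (A + B), b₁ + u - A ∈ Set.Icc b₁ b₂ :=
        fun u hu => ⟨by linarith [hu.1], by linarith [hu.2]⟩
      have mR : ∀ u ∈ Set.Icc (A + B) L, c₁ + u - A - B ∈ Set.Icc c₁ c₂ :=
        fun u hu => ⟨by linarith [hu.1], by linarith [hu.2]⟩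
      have iccP : Set.Icc a₁ a₂ ⊆ Set.Icc (0:ℝ) Lp :=
        fun u hu => ⟨ha1.trans hu.1, hu.2.trans ha2⟩
      have iccQ : Set.Icc b₁ b₂ ⊆ Set.Icc (0:ℝ) Lq :=
        fun u hu => ⟨hb1.trans hu.1, hu.2.trans hb2⟩
      have iccR : Set.Icc c₁ c₂ ⊆ Set.Icc (0:ℝ) Lr :=
        fun u hu => ⟨hc1.trans hu.1, hu.2.trans hc2⟩
      rcases hsplit s hs with hs' | hs' | hs' <;> rcases hsplit t ht with ht' | ht' | ht'
      · rw [hγ1 s hs', hγ1 t ht'] at hst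
        have := injP _ (iccP (mP s hs')) _ (iccP (mP t ht')) hst
        linarith
      · rw [hγ1 s hs', hγ2 t ht'] at hst
        obtain ⟨u1, u2⟩ := ncPQ _ (mP s hs') _ (mQ t ht') hst
        linarith
      · rw [hγ1 s hs', hγ3 t ht'] at hst
        obtain ⟨u1, u2⟩ := ncRP _ (mR t ht') _ (mP s hs') hst.symm
        linarith [ht.2]
      · rw [hγ2 s hs', hγ1 t ht'] at hst
        obtain ⟨u1, u2⟩ := ncPQ _ (mP t ht') _ (mQ s hs') hst.symm
        linarith
      · rw [hγ2 s hs', hγ2 t ht'] at hst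
        have := injQ _ (iccQ (mQ s hs')) _ (iccQ (mQ t ht')) hst
        linarith
      · rw [hγ2 s hs', hγ3 t ht'] at hst
        obtain ⟨u1, u2⟩ := ncQR _ (mQ s hs') _ (mR t ht') hst
        linarith
      · rw [hγ3 s hs', hγ1 t ht'] at hst
        obtain ⟨u1, u2⟩ := ncRP _ (mR s hs') _ (mP t ht') hst
        linarith [hs.2]
      · rw [hγ3 s hs', hγ2 t ht'] at hst
        obtain ⟨u1, u2⟩ := ncQR _ (mQ t ht') _ (mR s hs') hst.symm
        linarith
      · rw [hγ3 s hs', hγ3 t ht'] at hst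
        have := injR _ (iccR (mR s hs')) _ (iccR (mR t ht')) hst
        linarith
  obtain ⟨pc, hpcP, hpc⟩ := hTG.T2 γ A (A + B) L tri
  refine ⟨a₁, a₂, b₁, b₂, c₁, c₂, ha1, ha12, ha2, hb1, hb12, hb2, hc1, hc12, hc2,
    e1, e2, e3, Or.inr ⟨pc, hpcP, ?_⟩⟩
  rintro x ((⟨u, hu, rfl⟩ | ⟨u, hu, rfl⟩) | ⟨u, hu, rfl⟩)
  · refine hpc ⟨u - a₁, ⟨by linarith [hu.1], by linarith [hu.2]⟩, ?_⟩
    rw [hγ1 (u - a₁) ⟨by linarith [hu.1], by rw [hA]; linarith [hu.2]⟩]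
    congr 1
    ring
  · refine hpc ⟨u - b₁ + A, ⟨by linarith [hu.1], by linarith [hu.2]⟩, ?_⟩
    rw [hγ2 (u - b₁ + A) ⟨by linarith [hu.1], by rw [hB]; linarith [hu.2]⟩]
    congr 1
    ring
  · refine hpc ⟨u - c₁ + A + B, ⟨by linarith [hu.1], by linarith [hu.2]⟩, ?_⟩
    rw [hγ3 (u - c₁ + A + B) ⟨by linarith [hu.1], by rw [hL, hC]; linarith [hu.2]⟩]
    congr 1
    ring
end

section
/- In a tree-graded space F, let x ∈ F and let T_x be the set of points y ∈ F such that every geodesic from x to y intersects every piece in at most one point. If y ∈ T_x, then T_x = T_y. -/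
/-- The transversal tree of `F` at `x`: the set of points `y` such that every geodesic
from `x` to `y` intersects every piece in at most one point. -/
def transversalTree {F : Type*} [MetricSpace F] (P : Set (Set F)) (x : F) : Set F :=
  {y | ∀ γ : ℝ → F, γ 0 = x → γ (dist x y) = y → IsGeodesicOn γ 0 (dist x y) →
    ∀ p ∈ P, (γ '' Set.Icc 0 (dist x y) ∩ p).Subsingleton}

open Set

section Helpers
variable {F : Type*} [MetricSpace F]

lemma IsGeodesicOn.injOn {γ : ℝ → F} {a b : ℝ} (h : IsGeodesicOn γ a b) :
    InjOn γ (Icc a b) := by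
  intro s hs t ht hst
  have := h s hs t ht
  rw [hst, dist_self] at this
  have : s - t = 0 := abs_eq_zero.mp this.symm
  linarith

lemma IsGeodesicOn.continuousOn {γ : ℝ → F} {a b : ℝ} (h : IsGeodesicOn γ a b) :
    ContinuousOn γ (Icc a b) := by
  apply LipschitzOnWith.continuousOn (K := 1)
  apply LipschitzOnWith.of_dist_le_mul
  intro s hs t ht
  rw [h s hs t ht]
  simp [Real.dist_eq, abs_sub_comm]

lemma IsGeodesicOn.mono {γ : ℝ → F} {a b a' b' : ℝ} (h : IsGeodesicOn γ a b)
    (ha : a ≤ a') (hb : b' ≤ b) : IsGeodesicOn γ a' b' := by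
  intro s hs t ht
  exact h s ⟨le_trans ha hs.1, le_trans hs.2 hb⟩ t ⟨le_trans ha ht.1, le_trans ht.2 hb⟩

lemma isClosed_coincidence {γ₁ γ₂ : ℝ → F} {a b : ℝ} (f g : ℝ → ℝ)
    (hf : Continuous f) (hg : Continuous g)
    (h₁ : ContinuousOn γ₁ (f '' Icc a b)) (h₂ : ContinuousOn γ₂ (g '' Icc a b)) :
    IsClosed {r ∈ Icc a b | γ₁ (f r) = γ₂ (g r)} := by
  have hc : ContinuousOn (fun r => dist (γ₁ (f r)) (γ₂ (g r))) (Icc a b) := by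
    exact continuous_dist.comp_continuousOn
      ((h₁.comp hf.continuousOn (fun r hr => mem_image_of_mem f hr)).prodMk
       (h₂.comp hg.continuousOn (fun r hr => mem_image_of_mem g hr)))
  have : {r ∈ Icc a b | γ₁ (f r) = γ₂ (g r)}
      = Icc a b ∩ (fun r => dist (γ₁ (f r)) (γ₂ (g r))) ⁻¹' {0} := by
    ext r; simp [dist_eq_zero]
  rw [this]
  exact hc.preimage_isClosed_of_isClosed isClosed_Icc isClosed_singleton

lemma exists_gap {E : Set ℝ} (hE : IsClosed E) {a b r : ℝ} (hsub : E ⊆ Icc a b)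
    (ha : a ∈ E) (hb : b ∈ E) (hr : r ∈ Icc a b) (hrE : r ∉ E) :
    ∃ a' b', a' ∈ E ∧ b' ∈ E ∧ a' < r ∧ r < b' ∧ ∀ e ∈ E, e ∉ Ioo a' b' := by
  have hEl : IsClosed (E ∩ Icc a r) := hE.inter isClosed_Icc
  have hEr : IsClosed (E ∩ Icc r b) := hE.inter isClosed_Icc
  have hnl : (E ∩ Icc a r).Nonempty := ⟨a, ha, le_refl a, hr.1⟩
  have hnr : (E ∩ Icc r b).Nonempty := ⟨b, hb, hr.2, le_refl b⟩
  have hbl : BddAbove (E ∩ Icc a r) := ⟨r, fun e he => he.2.2⟩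
  have hbr : BddBelow (E ∩ Icc r b) := ⟨r, fun e he => he.2.1⟩
  refine ⟨sSup (E ∩ Icc a r), sInf (E ∩ Icc r b),
    (hEl.csSup_mem hnl hbl).1, (hEr.csInf_mem hnr hbr).1, ?_, ?_, ?_⟩
  · rcases lt_or_eq_of_le (hEl.csSup_mem hnl hbl).2.2 with h | h
    · exact h
    · exact absurd (h ▸ (hEl.csSup_mem hnl hbl).1) hrE
  · rcases lt_or_eq_of_le (hEr.csInf_mem hnr hbr).2.1 with h | h
    · exact h
    · exact absurd (h ▸ (hEr.csInf_mem hnr hbr).1) hrE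
  · intro e he hmem
    rcases le_total e r with h | h
    · have : e ≤ sSup (E ∩ Icc a r) := le_csSup hbl ⟨he, (hsub he).1, h⟩
      exact absurd hmem.1 (not_lt.mpr this)
    · have : sInf (E ∩ Icc r b) ≤ e := csInf_le hbr ⟨he, h, (hsub he).2⟩
      exact absurd hmem.2 (not_lt.mpr this)

lemma bigon_in_piece {P : Set (Set F)} (hTG : IsTreeGraded P)
    {γ₁ γ₂ : ℝ → F} {a b : ℝ} (hab : a < b)
    (h₁ : IsGeodesicOn γ₁ a b) (h₂ : IsGeodesicOn γ₂ a b)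
    (hea : γ₁ a = γ₂ a) (heb : γ₁ b = γ₂ b)
    (hcross : ∀ r ∈ Icc a b, ∀ r' ∈ Icc a b, γ₁ r = γ₂ r' →
      (r = a ∧ r' = a) ∨ (r = b ∧ r' = b)) :
    ∃ q ∈ P, (∀ r ∈ Icc a b, γ₁ r ∈ q) ∧ (∀ r ∈ Icc a b, γ₂ r ∈ q) := by
  set ℓ := b - a with hℓ
  have hℓpos : 0 < ℓ := by simp [hℓ]; linarith
  set γ : ℝ → F := fun r => if r ≤ ℓ then γ₁ (a + r) else γ₂ (b + ℓ - r) with hγ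
  have hγ1 : ∀ r ∈ Icc (0:ℝ) ℓ, γ r = γ₁ (a + r) := by
    intro r hr; simp only [hγ]; rw [if_pos hr.2]
  have hγ2 : ∀ r ∈ Icc ℓ (2*ℓ), γ r = γ₂ (b + ℓ - r) := by
    intro r hr
    simp only [hγ]
    by_cases h : r ≤ ℓ
    · have : r = ℓ := le_antisymm h hr.1
      rw [if_pos h, this]
      have : a + ℓ = b := by linarith
      rw [this, heb]
      congr 1; ring
    · rw [if_neg h]
  have htri : SimpleGeodesicTriangle γ ℓ ℓ (2*ℓ) := by
    constructor
    · linarith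
    · linarith
    · linarith
    · linarith
    · -- side1
      intro s hs t ht
      rw [hγ1 s hs, hγ1 t ht]
      have := h₁ (a+s) ⟨by linarith [hs.1], by linarith [hs.2]⟩
        (a+t) ⟨by linarith [ht.1], by linarith [ht.2]⟩
      rw [this]; congr 1; ring
    · -- side2 degenerate
      intro s hs t ht
      have hs' : s = ℓ := le_antisymm hs.2 hs.1
      have ht' : t = ℓ := le_antisymm ht.2 ht.1
      rw [hs', ht']; simp
    · -- side3
      intro s hs t ht
      rw [hγ2 s hs, hγ2 t ht]
      have := h₂ (b+ℓ-s) ⟨by linarith [hs.2], by linarith [hs.1]⟩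
        (b+ℓ-t) ⟨by linarith [ht.2], by linarith [ht.1]⟩
      rw [this]
      rw [show b + ℓ - s - (b + ℓ - t) = -(s - t) by ring, abs_neg]
    · -- closed
      rw [hγ1 0 ⟨le_refl 0, le_of_lt hℓpos⟩, hγ2 (2*ℓ) ⟨by linarith, le_refl _⟩]
      rw [show a + 0 = a by ring, show b + ℓ - 2*ℓ = a by rw [hℓ]; ring, hea]
    · -- simple
      have key : ∀ r₁ ∈ Ico (0:ℝ) (2*ℓ), ∀ r₂ ∈ Ico (0:ℝ) (2*ℓ), r₁ ≤ r₂ →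
          γ r₁ = γ r₂ → r₁ = r₂ := by
        intro r₁ hr₁ r₂ hr₂ hle heq
        by_cases c₁ : r₁ ≤ ℓ <;> by_cases c₂ : r₂ ≤ ℓ
        · -- both side1
          rw [hγ1 r₁ ⟨hr₁.1, c₁⟩, hγ1 r₂ ⟨hr₂.1, c₂⟩] at heq
          have := h₁.injOn ⟨by linarith [hr₁.1], by linarith⟩
            ⟨by linarith [hr₂.1], by linarith⟩ heq
          linarith
        · -- r₁ side1, r₂ side3
          push_neg at c₂
          rw [hγ1 r₁ ⟨hr₁.1, c₁⟩, hγ2 r₂ ⟨le_of_lt c₂, le_of_lt hr₂.2⟩] at heq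
          have m₁ : a + r₁ ∈ Icc a b := ⟨by linarith [hr₁.1], by linarith⟩
          have m₂ : b + ℓ - r₂ ∈ Icc a b := ⟨by linarith [hr₂.2], by linarith⟩
          rcases hcross _ m₁ _ m₂ heq with ⟨e₁, e₂⟩ | ⟨e₁, e₂⟩
          · exfalso; have : r₂ = 2*ℓ := by rw [hℓ] at e₂ ⊢; linarith
            linarith [hr₂.2]
          · exfalso; have : r₂ = ℓ := by linarith
            linarith
        · -- impossible ordering
          push_neg at c₁; linarith
        · -- both side3
          push_neg at c₁ c₂
          rw [hγ2 r₁ ⟨le_of_lt c₁, le_of_lt hr₁.2⟩, hγ2 r₂ ⟨le_of_lt c₂, le_of_lt hr₂.2⟩] at heq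
          have := h₂.injOn ⟨by linarith [hr₁.2], by linarith⟩
            ⟨by linarith [hr₂.2], by linarith⟩ heq
          linarith
      intro r₁ hr₁ r₂ hr₂ heq
      rcases le_total r₁ r₂ with h | h
      · exact key r₁ hr₁ r₂ hr₂ h heq
      · exact (key r₂ hr₂ r₁ hr₁ h heq.symm).symm
  obtain ⟨q, hq, hsub⟩ := hTG.T2 γ ℓ ℓ (2*ℓ) htri
  refine ⟨q, hq, ?_, ?_⟩
  · intro r hr
    have : γ₁ r = γ (r - a) := by
      rw [hγ1 (r-a) ⟨by linarith [hr.1], by linarith [hr.2]⟩]; congr 1; ring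
    rw [this]
    exact hsub (mem_image_of_mem γ ⟨by linarith [hr.1], by linarith [hr.2]⟩)
  · intro r hr
    have : γ₂ r = γ (b + ℓ - r) := by
      rw [hγ2 (b+ℓ-r) ⟨by linarith [hr.2], by linarith [hr.1]⟩]; congr 1; ring
    rw [this]
    exact hsub (mem_image_of_mem γ ⟨by linarith [hr.2, hℓpos.le], by linarith [hr.1]⟩)

lemma eq_piece_of_two_common {P : Set (Set F)} (hTG : IsTreeGraded P)
    {p q : Set F} (hp : p ∈ P) (hq : q ∈ P) {u v : F}
    (hu : u ∈ p) (hu' : u ∈ q) (hv : v ∈ p) (hv' : v ∈ q) (huv : u ≠ v) : q = p := by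
  by_contra h
  exact huv (hTG.T1 p hp q hq (Ne.symm h) ⟨hu, hu'⟩ ⟨hv, hv'⟩)

lemma geodesic_mem_piece_of_endpoints {P : Set (Set F)} (hTG : IsTreeGraded P)
    {p : Set F} (hp : p ∈ P) {g : ℝ → F} {a b : ℝ} (hab : a ≤ b)
    (hg : IsGeodesicOn g a b) (hga : g a ∈ p) (hgb : g b ∈ p) :
    ∀ r ∈ Icc a b, g r ∈ p := by
  have hmema : a ∈ Icc a b := ⟨le_refl a, hab⟩
  have hmemb : b ∈ Icc a b := ⟨hab, le_refl b⟩
  have hd : dist (g a) (g b) = b - a := by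
    rw [hg a hmema b hmemb, abs_sub_comm, abs_of_nonneg (by linarith)]
  obtain ⟨g', hg'0, hg'd, hg'geo, hg'sub⟩ := hTG.pieces_geodesic p hp (g a) hga (g b) hgb
  rw [hd] at hg'd hg'geo hg'sub
  set g'' : ℝ → F := fun r => g' (r - a) with hg''
  have hsh : ∀ r ∈ Icc a b, r - a ∈ Icc (0:ℝ) (b-a) := by
    intro r hr; exact ⟨by linarith [hr.1], by linarith [hr.2]⟩
  have hg''geo : IsGeodesicOn g'' a b := by
    intro s hs t ht
    rw [hg''];
    have := hg'geo (s-a) (hsh s hs) (t-a) (hsh t ht)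
    simp only at this ⊢
    rw [this, show s - a - (t - a) = s - t by ring]
  have hg''a : g'' a = g a := by simp [hg'', hg'0]
  have hg''b : g'' b = g b := by simp only [hg'']; exact hg'd
  have hg''p : ∀ r ∈ Icc a b, g'' r ∈ p := by
    intro r hr; exact hg'sub (mem_image_of_mem g' (hsh r hr))
  -- coincidence fact
  have fact : ∀ r ∈ Icc a b, ∀ r' ∈ Icc a b, g r = g'' r' → r = r' := by
    intro r hr r' hr' he
    have e1 : dist (g a) (g r) = r - a := by
      rw [hg a hmema r hr, abs_sub_comm, abs_of_nonneg (by linarith [hr.1])]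
    have e2 : dist (g'' a) (g'' r') = r' - a := by
      rw [hg''geo a hmema r' hr', abs_sub_comm, abs_of_nonneg (by linarith [hr'.1])]
    rw [← hg''a, he] at e1
    rw [e1] at e2
    linarith
  set E := {r ∈ Icc a b | g r = g'' r} with hE
  have hEclosed : IsClosed E := by
    have := isClosed_coincidence (γ₁ := g) (γ₂ := g') (a := a) (b := b)
      id (fun r => r - a) continuous_id (by continuity)
      (by rw [image_id]; exact hg.continuousOn)
      (by
        apply hg'geo.continuousOn.mono
        rintro _ ⟨r, hr, rfl⟩
        exact hsh r hr)
    exact this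
  have hEsub : E ⊆ Icc a b := fun r hr => hr.1
  have haE : a ∈ E := ⟨hmema, hg''a.symm⟩
  have hbE : b ∈ E := ⟨hmemb, hg''b.symm⟩
  intro r hr
  by_cases hrE : r ∈ E
  · rw [hrE.2]; exact hg''p r hr
  · obtain ⟨a', b', ha'E, hb'E, ha'r, hrb', hgap⟩ :=
      exists_gap hEclosed hEsub haE hbE hr hrE
    have ha'm : a' ∈ Icc a b := hEsub ha'E
    have hb'm : b' ∈ Icc a b := hEsub hb'E
    have hsubI : Icc a' b' ⊆ Icc a b := Icc_subset_Icc ha'm.1 hb'm.2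
    obtain ⟨q, hq, hq1, hq2⟩ := bigon_in_piece hTG (lt_trans ha'r hrb')
      (hg.mono ha'm.1 hb'm.2) (hg''geo.mono ha'm.1 hb'm.2) ha'E.2 hb'E.2
      (by
        intro r₁ hr₁ r₂ hr₂ he
        have := fact r₁ (hsubI hr₁) r₂ (hsubI hr₂) he
        subst this
        have : r₁ ∈ E := ⟨hsubI hr₁, he⟩
        rcases lt_or_eq_of_le hr₁.1 with h | h
        · rcases lt_or_eq_of_le hr₁.2 with h' | h'
          · exact absurd ⟨h, h'⟩ (hgap r₁ this)
          · right; exact ⟨h', h'⟩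
        · left; exact ⟨h.symm, h.symm⟩)
    have hqp : q = p := by
      refine eq_piece_of_two_common hTG hp hq (u := g'' a') (v := g'' b')
        (hg''p a' ha'm) (hq2 a' ⟨le_refl _, le_of_lt (lt_trans ha'r hrb')⟩)
        (hg''p b' hb'm) (hq2 b' ⟨le_of_lt (lt_trans ha'r hrb'), le_refl _⟩) ?_
      intro he
      have := hg''geo.injOn ha'm hb'm he
      linarith
    rw [← hqp]
    exact hq1 r ⟨le_of_lt ha'r, le_of_lt hrb'⟩

lemma transversal_symm {P : Set (Set F)} {x y : F} (hy : y ∈ transversalTree P x) :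
    x ∈ transversalTree P y := by
  intro γ hγ0 hγd hgeo p hp
  have hd : dist y x = dist x y := dist_comm y x
  set d := dist y x with hdd
  set γ' : ℝ → F := fun r => γ (d - r) with hγ'
  have h0 : γ' 0 = x := by simp [hγ', hγd]
  have h1 : γ' (dist x y) = y := by simp [hγ', ← hd, hγ0]
  have hgeo' : IsGeodesicOn γ' 0 (dist x y) := by
    intro s hs t ht
    rw [hγ']
    simp only
    rw [hgeo (d - s) ⟨by linarith [hs.2, hd], by linarith [hs.1]⟩
      (d - t) ⟨by linarith [ht.2, hd], by linarith [ht.1]⟩]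
    rw [show d - s - (d - t) = -(s - t) by ring, abs_neg]
  have hsub := hy γ' h0 h1 hgeo' p hp
  intro w₁ hw₁ w₂ hw₂
  obtain ⟨⟨r₁, hr₁, rfl⟩, hp₁⟩ := hw₁
  obtain ⟨⟨r₂, hr₂, rfl⟩, hp₂⟩ := hw₂
  have e₁ : γ r₁ = γ' (d - r₁) := by simp [hγ']
  have e₂ : γ r₂ = γ' (d - r₂) := by simp [hγ']
  rw [e₁, e₂]
  refine hsub ⟨mem_image_of_mem γ' ⟨by linarith [hr₁.2, hd], by linarith [hr₁.1, hd]⟩, ?_⟩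
    ⟨mem_image_of_mem γ' ⟨by linarith [hr₂.2, hd], by linarith [hr₂.1, hd]⟩, ?_⟩
  · rw [← e₁]; exact hp₁
  · rw [← e₂]; exact hp₂


/-- If two geodesics `γ₁, g` on `[lo,hi]` share both endpoints, coincidences happen only
at equal parameters, and `g` lies in the piece `p` on `[σ,τ]`, then `γ₁` passes through
two distinct points of `p`. -/
lemma two_points_transfer {P : Set (Set F)} (hTG : IsTreeGraded P)
    {p : Set F} (hp : p ∈ P) {γ₁ g : ℝ → F} {lo hi σ τ : ℝ}
    (hloσ : lo ≤ σ) (hστ : σ < τ) (hτhi : τ ≤ hi)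
    (h₁ : IsGeodesicOn γ₁ lo hi) (h₂ : IsGeodesicOn g lo hi)
    (hfact : ∀ r ∈ Icc lo hi, ∀ r' ∈ Icc lo hi, γ₁ r = g r' → r = r')
    (hlo : γ₁ lo = g lo) (hhi : γ₁ hi = g hi)
    (hgp : ∀ r ∈ Icc σ τ, g r ∈ p) :
    ∃ c₁ c₂, c₁ < c₂ ∧ c₁ ∈ Icc lo hi ∧ c₂ ∈ Icc lo hi ∧ γ₁ c₁ ∈ p ∧ γ₁ c₂ ∈ p := by
  have hlohi : lo ≤ hi := le_trans (le_trans hloσ hστ.le) hτhi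
  set E := {r ∈ Icc lo hi | γ₁ r = g r} with hE
  have hEclosed : IsClosed E := by
    have := isClosed_coincidence (γ₁ := γ₁) (γ₂ := g) (a := lo) (b := hi) id id
      continuous_id continuous_id (by rw [image_id]; exact h₁.continuousOn)
      (by rw [image_id]; exact h₂.continuousOn)
    exact this
  by_cases hall : Icc σ τ ⊆ E
  · refine ⟨σ, τ, hστ, ⟨hloσ, le_trans hστ.le hτhi⟩, ⟨le_trans hloσ hστ.le, hτhi⟩, ?_, ?_⟩
    · rw [(hall ⟨le_refl σ, hστ.le⟩).2]; exact hgp σ ⟨le_refl σ, hστ.le⟩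
    · rw [(hall ⟨hστ.le, le_refl τ⟩).2]; exact hgp τ ⟨hστ.le, le_refl τ⟩
  · obtain ⟨r₀, hr₀m, hr₀E⟩ := not_subset.mp hall
    obtain ⟨a', b', ha'E, hb'E, ha'r, hrb', hgap⟩ := exists_gap hEclosed
      (fun e he => he.1) ⟨⟨le_refl lo, hlohi⟩, hlo⟩ ⟨⟨hlohi, le_refl hi⟩, hhi⟩
      ⟨le_trans hloσ hr₀m.1, le_trans hr₀m.2 hτhi⟩ hr₀E
    have ha'm := ha'E.1
    have hb'm := hb'E.1
    have ha'b' : a' < b' := lt_trans ha'r hrb'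
    have hsubI : Icc a' b' ⊆ Icc lo hi := Icc_subset_Icc ha'm.1 hb'm.2
    obtain ⟨q, hq, hq1, hq2⟩ := bigon_in_piece hTG ha'b'
      (h₁.mono ha'm.1 hb'm.2) (h₂.mono ha'm.1 hb'm.2) ha'E.2 hb'E.2
      (by
        intro r₁ hr₁ r₂ hr₂ he
        have h12 := hfact r₁ (hsubI hr₁) r₂ (hsubI hr₂) he
        subst h12
        have hmemE : r₁ ∈ E := ⟨hsubI hr₁, he⟩
        rcases lt_or_eq_of_le hr₁.1 with h | h
        · rcases lt_or_eq_of_le hr₁.2 with h' | h'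
          · exact absurd ⟨h, h'⟩ (hgap r₁ hmemE)
          · right; exact ⟨h', h'⟩
        · left; exact ⟨h.symm, h.symm⟩)
    have hc12 : max a' σ < min b' τ := by
      rw [max_lt_iff, lt_min_iff, lt_min_iff]
      exact ⟨⟨ha'b', lt_of_lt_of_le ha'r hr₀m.2⟩, ⟨lt_of_le_of_lt hr₀m.1 hrb', hστ⟩⟩
    have hqp : q = p := by
      refine eq_piece_of_two_common hTG hp hq (u := g (max a' σ)) (v := g (min b' τ))
        (hgp _ ⟨le_max_right a' σ, le_trans hc12.le (min_le_right b' τ)⟩)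
        (hq2 _ ⟨le_max_left a' σ, le_trans hc12.le (min_le_left b' τ)⟩)
        (hgp _ ⟨le_trans (le_max_right a' σ) hc12.le, min_le_right b' τ⟩)
        (hq2 _ ⟨le_trans (le_max_left a' σ) hc12.le, min_le_left b' τ⟩) ?_
      intro he
      have := h₂.injOn
        ⟨le_trans ha'm.1 (le_max_left a' σ),
          le_trans (le_trans hc12.le (min_le_left b' τ)) hb'm.2⟩
        ⟨le_trans ha'm.1 (le_trans (le_max_left a' σ) hc12.le),
          le_trans (min_le_left b' τ) hb'm.2⟩ he
      linarith
    exact ⟨a', b', ha'b', ha'm, hb'm, hqp ▸ hq1 a' ⟨le_refl a', ha'b'.le⟩,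
      hqp ▸ hq1 b' ⟨ha'b'.le, le_refl b'⟩⟩

lemma transversal_trans (hF : GeodesicSpace F) {P : Set (Set F)} (hTG : IsTreeGraded P)
    {x y z : F} (hy : y ∈ transversalTree P x) (hz : z ∈ transversalTree P x) :
    z ∈ transversalTree P y := by
  intro g hg0 hgD hggeo p hp
  by_contra hcon
  rw [Set.not_subsingleton_iff] at hcon
  obtain ⟨u, hu, v, hv, huv⟩ := hcon
  obtain ⟨⟨s₀, hs₀, rfl⟩, hup⟩ := hu
  obtain ⟨⟨t₀, ht₀, rfl⟩, hvp⟩ := hv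
  set D := dist y z with hD
  have pack : ∃ s t, s < t ∧ s ∈ Icc 0 D ∧ t ∈ Icc 0 D ∧ g s ∈ p ∧ g t ∈ p := by
    rcases lt_trichotomy s₀ t₀ with h | h | h
    · exact ⟨s₀, t₀, h, hs₀, ht₀, hup, hvp⟩
    · exact absurd (by rw [h]) huv
    · exact ⟨t₀, s₀, h, ht₀, hs₀, hvp, hup⟩
  obtain ⟨s, t, hst, hs, ht, hgsp, hgtp⟩ := pack
  have hD0 : 0 ≤ D := dist_nonneg
  have hseg : ∀ r ∈ Icc s t, g r ∈ p :=
    geodesic_mem_piece_of_endpoints hTG hp hst.le (hggeo.mono hs.1 ht.2) hgsp hgtp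
  obtain ⟨α, hα0, hαm, hαgeo⟩ := hF x y
  obtain ⟨β, hβ0, hβn, hβgeo⟩ := hF x z
  set m := dist x y with hm
  set n := dist x z with hn
  have hm0 : 0 ≤ m := dist_nonneg
  have hn0 : 0 ≤ n := dist_nonneg
  have hyα := hy α hα0 hαm hαgeo p hp
  have hzβ := hz β hβ0 hβn hβgeo p hp
  -- coincidence parameter facts
  have factαg : ∀ s' ∈ Icc (0:ℝ) m, ∀ e ∈ Icc (0:ℝ) D, α s' = g e → s' = m - e := by
    intro s' hs' e he heq
    have h1 : dist (α s') (α m) = m - s' := by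
      rw [hαgeo s' hs' m ⟨hm0, le_refl m⟩, abs_of_nonpos (by linarith [hs'.2]), neg_sub]
    have h2 : dist (g e) (g 0) = e := by
      rw [hggeo e he 0 ⟨le_refl 0, hD0⟩, sub_zero, abs_of_nonneg he.1]
    rw [heq, hαm, ← hg0] at h1
    rw [h1] at h2
    linarith
  have factαβ : ∀ r ∈ Icc (0:ℝ) m, ∀ r' ∈ Icc (0:ℝ) n, α r = β r' → r = r' := by
    intro r hr r' hr' heq
    have h1 : dist (α 0) (α r) = r := by
      rw [hαgeo 0 ⟨le_refl 0, hm0⟩ r hr, abs_of_nonpos (by linarith [hr.1]), neg_sub, sub_zero]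
    have h2 : dist (β 0) (β r') = r' := by
      rw [hβgeo 0 ⟨le_refl 0, hn0⟩ r' hr', abs_of_nonpos (by linarith [hr'.1]), neg_sub, sub_zero]
    rw [heq, hα0, ← hβ0] at h1
    rw [h1] at h2
    linarith
  have factgβ : ∀ e ∈ Icc (0:ℝ) D, ∀ r' ∈ Icc (0:ℝ) n, g e = β r' → r' = n - D + e := by
    intro e he r' hr' heq
    have h1 : dist (g e) (g D) = D - e := by
      rw [hggeo e he D ⟨hD0, le_refl D⟩, abs_of_nonpos (by linarith [he.2]), neg_sub]
    have h2 : dist (β r') (β n) = n - r' := by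
      rw [hβgeo r' hr' n ⟨hn0, le_refl n⟩, abs_of_nonpos (by linarith [hr'.2]), neg_sub]
    rw [← heq, hβn, ← hgD] at h2
    rw [h1] at h2
    linarith
  -- the coincidence set between α (reversed) and g
  set C := {e ∈ Icc (0:ℝ) (min m D) | α (m - e) = g e} with hCdef
  have hCclosed : IsClosed C := by
    have := isClosed_coincidence (γ₁ := α) (γ₂ := g) (a := (0:ℝ)) (b := min m D)
      (fun e => m - e) id (continuous_const.sub continuous_id) continuous_id
      (by
        apply hαgeo.continuousOn.mono
        rintro _ ⟨r, hr, rfl⟩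
        refine ⟨?_, ?_⟩
        · show (0:ℝ) ≤ m - r
          linarith [hr.2, min_le_left m D]
        · show m - r ≤ m
          linarith [hr.1])
      (by
        rw [image_id]
        exact hggeo.continuousOn.mono (Icc_subset_Icc (le_refl 0) (min_le_right m D)))
    exact this
  have h0C : (0:ℝ) ∈ C := by
    refine ⟨⟨le_refl 0, le_min hm0 hD0⟩, ?_⟩
    rw [sub_zero, hαm, hg0]
  have hCbdd : BddAbove C := ⟨min m D, fun e he => he.1.2⟩
  set ρ := sSup C with hρdef
  have hρC : ρ ∈ C := hCclosed.csSup_mem ⟨0, h0C⟩ hCbdd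
  have hρmax : ∀ e ∈ C, e ≤ ρ := fun e he => le_csSup hCbdd he
  have hρ0 : 0 ≤ ρ := hρC.1.1
  have hρm : ρ ≤ m := le_trans hρC.1.2 (min_le_left m D)
  have hρD : ρ ≤ D := le_trans hρC.1.2 (min_le_right m D)
  have hw : α (m - ρ) = g ρ := hρC.2
  rcases le_or_gt t ρ with htρ | hρt
  · -- CASE A : t ≤ ρ, contradiction with y ∈ T_x
    have hrefl : IsGeodesicOn (fun e => α (m - e)) 0 ρ := by
      intro s' hs' t' ht'
      simp only
      rw [hαgeo (m - s') ⟨by linarith [hs'.2], by linarith [hs'.1]⟩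
        (m - t') ⟨by linarith [ht'.2], by linarith [ht'.1]⟩]
      rw [show m - s' - (m - t') = -(s' - t') by ring, abs_neg]
    obtain ⟨c₁, c₂, hc, hc₁m, hc₂m, hb₁, hb₂⟩ := two_points_transfer hTG hp
      (lo := 0) (hi := ρ) (σ := s) (τ := t) hs.1 hst htρ hrefl
      (hggeo.mono (le_refl 0) hρD)
      (fun r hr r' hr' he => by
        have := factαg (m - r) ⟨by linarith [hr.2], by linarith [hr.1]⟩
          r' ⟨hr'.1, by linarith [hr'.2]⟩ he
        linarith)
      (by show α (m - 0) = g 0; rw [sub_zero, hαm, hg0])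
      (by show α (m - ρ) = g ρ; exact hw)
      hseg
    have hmem₁ : α (m - c₁) ∈ α '' Icc 0 m ∩ p :=
      ⟨mem_image_of_mem α ⟨by linarith [hc₁m.2], by linarith [hc₁m.1]⟩, hb₁⟩
    have hmem₂ : α (m - c₂) ∈ α '' Icc 0 m ∩ p :=
      ⟨mem_image_of_mem α ⟨by linarith [hc₂m.2], by linarith [hc₂m.1]⟩, hb₂⟩
    have heq := hyα hmem₁ hmem₂
    have := hαgeo.injOn ⟨by linarith [hc₁m.2], by linarith [hc₁m.1]⟩
      ⟨by linarith [hc₂m.2], by linarith [hc₂m.1]⟩ heq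
    linarith
  · -- CASE B : ρ < t
    set Kg := {e ∈ Icc (max ρ (D - n)) D | g e = β (n - D + e)} with hKgdef
    have hKgclosed : IsClosed Kg := by
      have := isClosed_coincidence (γ₁ := g) (γ₂ := β) (a := max ρ (D - n)) (b := D)
        id (fun e => n - D + e) continuous_id (continuous_const.add continuous_id)
        (by
          rw [image_id]
          exact hggeo.continuousOn.mono
            (Icc_subset_Icc (le_trans hρ0 (le_max_left _ _)) (le_refl D)))
        (by
          apply hβgeo.continuousOn.mono
          rintro _ ⟨r, hr, rfl⟩
          have h1 : D - n ≤ r := le_trans (le_max_right ρ (D - n)) hr.1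
          refine ⟨?_, ?_⟩
          · show (0:ℝ) ≤ n - D + r
            linarith
          · show n - D + r ≤ n
            linarith [hr.2])
      exact this
    have hDKg : D ∈ Kg := by
      refine ⟨⟨max_le hρD (by linarith), le_refl D⟩, ?_⟩
      rw [show n - D + D = n by ring, hβn, hgD]
    have hKgbdd : BddBelow Kg := ⟨max ρ (D - n), fun e he => he.1.1⟩
    set e' := sInf Kg with he'def
    have he'Kg : e' ∈ Kg := hKgclosed.csInf_mem ⟨D, hDKg⟩ hKgbdd
    have he'min : ∀ e ∈ Kg, e' ≤ e := fun e he => csInf_le hKgbdd he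
    have he'ρ : ρ ≤ e' := le_trans (le_max_left _ _) he'Kg.1.1
    have he'n : 0 ≤ n - D + e' := by
      have := le_trans (le_max_right ρ (D - n)) he'Kg.1.1
      linarith
    have he'D : e' ≤ D := he'Kg.1.2
    have he'β : g e' = β (n - D + e') := he'Kg.2
    rcases lt_or_ge e' t with he't | hte'
    · -- CASE B1 : e' < t, contradiction with z ∈ T_x via two_points_transfer
      have htrans : IsGeodesicOn (fun r => β (n - D + r)) e' D := by
        intro s' hs' t' ht'
        simp only
        rw [hβgeo (n - D + s') ⟨by linarith [hs'.1], by linarith [hs'.2]⟩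
          (n - D + t') ⟨by linarith [ht'.1], by linarith [ht'.2]⟩]
        congr 1
        ring
      obtain ⟨c₁, c₂, hc, hc₁m, hc₂m, hb₁, hb₂⟩ := two_points_transfer hTG hp
        (lo := e') (hi := D) (σ := max e' s) (τ := t)
        (le_max_left e' s) (max_lt he't hst) ht.2 htrans
        (hggeo.mono (by linarith) (le_refl D))
        (fun r hr r' hr' he => by
          have := factgβ r' ⟨by linarith [hr'.1], hr'.2⟩
            (n - D + r) ⟨by linarith [hr.1], by linarith [hr.2]⟩ he.symm
          linarith)
        he'β.symm
        (by show β (n - D + D) = g D; rw [show n - D + D = n by ring, hβn, hgD])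
        (fun r hr => hseg r ⟨le_trans (le_max_right e' s) hr.1, hr.2⟩)
      have hmem₁ : β (n - D + c₁) ∈ β '' Icc 0 n ∩ p :=
        ⟨mem_image_of_mem β ⟨by linarith [hc₁m.1], by linarith [hc₁m.2]⟩, hb₁⟩
      have hmem₂ : β (n - D + c₂) ∈ β '' Icc 0 n ∩ p :=
        ⟨mem_image_of_mem β ⟨by linarith [hc₂m.1], by linarith [hc₂m.2]⟩, hb₂⟩
      have heq := hzβ hmem₁ hmem₂
      have := hβgeo.injOn ⟨by linarith [hc₁m.1], by linarith [hc₁m.2]⟩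
        ⟨by linarith [hc₂m.1], by linarith [hc₂m.2]⟩ heq
      linarith
    · -- CASE B2 : t ≤ e', build a simple geodesic triangle
      set Kα := {r ∈ Icc (0:ℝ) (min (m - ρ) (n - D + e')) | α r = β r} with hKαdef
      have hKαclosed : IsClosed Kα := by
        have := isClosed_coincidence (γ₁ := α) (γ₂ := β)
          (a := (0:ℝ)) (b := min (m - ρ) (n - D + e')) id id continuous_id continuous_id
          (by
            rw [image_id]
            exact hαgeo.continuousOn.mono (Icc_subset_Icc (le_refl 0)
              (le_trans (min_le_left _ _) (by linarith))))
          (by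
            rw [image_id]
            exact hβgeo.continuousOn.mono (Icc_subset_Icc (le_refl 0)
              (le_trans (min_le_right _ _) (by linarith))))
        exact this
      have h0Kα : (0:ℝ) ∈ Kα := by
        refine ⟨⟨le_refl 0, le_min (by linarith) he'n⟩, ?_⟩
        rw [hα0, hβ0]
      have hKαbdd : BddAbove Kα := ⟨min (m - ρ) (n - D + e'), fun r hr => hr.1.2⟩
      set rst := sSup Kα with hrstdef
      have hrstKα : rst ∈ Kα := hKαclosed.csSup_mem ⟨0, h0Kα⟩ hKαbdd
      have hrstmax : ∀ r ∈ Kα, r ≤ rst := fun r hr => le_csSup hKαbdd hr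
      have hrst0 : 0 ≤ rst := hrstKα.1.1
      have hrst1 : rst ≤ m - ρ := le_trans hrstKα.1.2 (min_le_left _ _)
      have hrst2 : rst ≤ n - D + e' := le_trans hrstKα.1.2 (min_le_right _ _)
      have hrstαβ : α rst = β rst := hrstKα.2
      set L1 := m - ρ - rst with hL1def
      set L2 := e' - ρ with hL2def
      set L3 := n - D + e' - rst with hL3def
      set L := L1 + L2 + L3 with hLdef
      have hL1 : 0 ≤ L1 := by rw [hL1def]; linarith
      have hL2 : 0 < L2 := by rw [hL2def]; linarith
      have hL3 : 0 ≤ L3 := by rw [hL3def]; linarith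
      set γ : ℝ → F := fun r => if r ≤ L1 then α (rst + r)
        else if r ≤ L1 + L2 then g (ρ + (r - L1))
        else β (n - D + e' - (r - L1 - L2)) with hγdef
      have hγa : ∀ r ∈ Icc (0:ℝ) L1, γ r = α (rst + r) := by
        intro r hr
        simp only [hγdef]
        rw [if_pos hr.2]
      have hγb : ∀ r ∈ Icc L1 (L1 + L2), γ r = g (ρ + (r - L1)) := by
        intro r hr
        simp only [hγdef]
        by_cases h : r ≤ L1
        · have hrL1 : r = L1 := le_antisymm h hr.1
          rw [if_pos h, hrL1, show rst + L1 = m - ρ by rw [hL1def]; ring, hw]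
          congr 1
          ring
        · rw [if_neg h, if_pos hr.2]
      have hγc : ∀ r ∈ Icc (L1 + L2) L, γ r = β (n - D + e' - (r - L1 - L2)) := by
        intro r hr
        simp only [hγdef]
        have h1 : ¬ r ≤ L1 := by
          have := hr.1
          push_neg
          linarith
        rw [if_neg h1]
        by_cases h : r ≤ L1 + L2
        · have hrL : r = L1 + L2 := le_antisymm h hr.1
          rw [if_pos h, hrL, show ρ + (L1 + L2 - L1) = e' by rw [hL2def]; ring, he'β]
          congr 1
          ring
        · rw [if_neg h]
      have hLpos : 0 < L := by rw [hLdef]; linarith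
      have htri : SimpleGeodesicTriangle γ L1 (L1 + L2) L := by
        refine ⟨hLpos, hL1, by linarith, by rw [hLdef]; linarith, ?_, ?_, ?_, ?_, ?_⟩
        · intro s' hs' t' ht'
          rw [hγa s' hs', hγa t' ht']
          rw [hαgeo (rst + s') ⟨by linarith [hs'.1], by linarith [hs'.2]⟩
            (rst + t') ⟨by linarith [ht'.1], by linarith [ht'.2]⟩]
          congr 1
          ring
        · intro s' hs' t' ht'
          rw [hγb s' hs', hγb t' ht']
          rw [hggeo (ρ + (s' - L1)) ⟨by linarith [hs'.1], by linarith [hs'.2]⟩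
            (ρ + (t' - L1)) ⟨by linarith [ht'.1], by linarith [ht'.2]⟩]
          congr 1
          ring
        · intro s' hs' t' ht'
          rw [hγc s' hs', hγc t' ht']
          rw [hβgeo (n - D + e' - (s' - L1 - L2)) ⟨by linarith [hs'.2], by linarith [hs'.1]⟩
            (n - D + e' - (t' - L1 - L2)) ⟨by linarith [ht'.2], by linarith [ht'.1]⟩]
          rw [show n - D + e' - (s' - L1 - L2) - (n - D + e' - (t' - L1 - L2)) = -(s' - t')
            by ring, abs_neg]
        · rw [hγa 0 ⟨le_refl 0, hL1⟩, hγc L ⟨by rw [hLdef]; linarith, le_refl L⟩]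
          rw [show rst + 0 = rst by ring,
            show n - D + e' - (L - L1 - L2) = rst by rw [hLdef, hL3def]; ring]
          exact hrstαβ
        · have key : ∀ r₁ ∈ Ico (0:ℝ) L, ∀ r₂ ∈ Ico (0:ℝ) L, r₁ ≤ r₂ →
              γ r₁ = γ r₂ → r₁ = r₂ := by
            intro r₁ hr₁ r₂ hr₂ hle heq
            by_cases h2a : r₂ ≤ L1
            · have h1a : r₁ ≤ L1 := le_trans hle h2a
              rw [hγa r₁ ⟨hr₁.1, h1a⟩, hγa r₂ ⟨hr₂.1, h2a⟩] at heq
              have := hαgeo.injOn ⟨by linarith [hr₁.1], by linarith⟩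
                ⟨by linarith [hr₂.1], by linarith⟩ heq
              linarith
            · push_neg at h2a
              by_cases h2b : r₂ ≤ L1 + L2
              · by_cases h1a : r₁ ≤ L1
                · -- cross α-g : impossible
                  exfalso
                  rw [hγa r₁ ⟨hr₁.1, h1a⟩, hγb r₂ ⟨h2a.le, h2b⟩] at heq
                  have hfa := factαg (rst + r₁) ⟨by linarith [hr₁.1], by linarith⟩
                    (ρ + (r₂ - L1)) ⟨by linarith, by linarith⟩ heq
                  have heC : (ρ + (r₂ - L1)) ∈ C := by
                    refine ⟨⟨by linarith, le_min (by linarith [hr₁.1]) (by linarith)⟩, ?_⟩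
                    rw [show m - (ρ + (r₂ - L1)) = rst + r₁ by linarith, heq]
                  have := hρmax _ heC
                  linarith
                · push_neg at h1a
                  rw [hγb r₁ ⟨h1a.le, le_trans hle h2b⟩, hγb r₂ ⟨h2a.le, h2b⟩] at heq
                  have := hggeo.injOn ⟨by linarith, by linarith⟩
                    ⟨by linarith, by linarith⟩ heq
                  linarith
              · push_neg at h2b
                by_cases h1a : r₁ ≤ L1
                · -- cross α-β : impossible
                  exfalso
                  rw [hγa r₁ ⟨hr₁.1, h1a⟩, hγc r₂ ⟨h2b.le, hr₂.2.le⟩] at heq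
                  have hfa := factαβ (rst + r₁) ⟨by linarith [hr₁.1], by linarith⟩
                    (n - D + e' - (r₂ - L1 - L2)) ⟨by linarith [hr₂.2], by linarith⟩ heq
                  have hKmem : (rst + r₁) ∈ Kα := by
                    refine ⟨⟨by linarith [hr₁.1], le_min (by linarith) (by linarith)⟩, ?_⟩
                    rw [heq, hfa]
                  have := hrstmax _ hKmem
                  have hr₁0 : r₁ = 0 := le_antisymm (by linarith) hr₁.1
                  have : r₂ = L := by rw [hLdef]; linarith [hL3def]
                  linarith [hr₂.2]
                · push_neg at h1a
                  by_cases h1b : r₁ ≤ L1 + L2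
                  · -- cross g-β : impossible
                    exfalso
                    rw [hγb r₁ ⟨h1a.le, h1b⟩, hγc r₂ ⟨h2b.le, hr₂.2.le⟩] at heq
                    have hfa := factgβ (ρ + (r₁ - L1)) ⟨by linarith, by linarith⟩
                      (n - D + e' - (r₂ - L1 - L2)) ⟨by linarith [hr₂.2], by linarith⟩ heq
                    have hKg2 : (ρ + (r₁ - L1)) ∈ Kg := by
                      refine ⟨⟨max_le (by linarith) (by linarith [hr₂.2]), by linarith⟩, ?_⟩
                      rw [heq, hfa]
                    have := he'min _ hKg2
                    linarith
                  · push_neg at h1b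
                    rw [hγc r₁ ⟨h1b.le, hr₁.2.le⟩, hγc r₂ ⟨h2b.le, hr₂.2.le⟩] at heq
                    have := hβgeo.injOn ⟨by linarith [hr₁.2], by linarith⟩
                      ⟨by linarith [hr₂.2], by linarith⟩ heq
                    linarith
          intro r₁ hr₁ r₂ hr₂ heq
          rcases le_total r₁ r₂ with h | h
          · exact key r₁ hr₁ r₂ hr₂ h heq
          · exact (key r₂ hr₂ r₁ hr₁ h heq.symm).symm
      obtain ⟨q, hq, hqsub⟩ := hTG.T2 γ L1 (L1 + L2) L htri
      have hqg : ∀ e ∈ Icc ρ e', g e ∈ q := by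
        intro e he
        have h1 : g e = γ (L1 + (e - ρ)) := by
          rw [hγb (L1 + (e - ρ)) ⟨by linarith [he.1], by linarith [he.2]⟩]
          congr 1
          ring
        rw [h1]
        exact hqsub (mem_image_of_mem γ ⟨by linarith [he.1], by rw [hLdef]; linarith [he.2]⟩)
      have hqβ : ∀ r ∈ Icc rst (n - D + e'), β r ∈ q := by
        intro r hr
        have h1 : β r = γ (L1 + L2 + (n - D + e' - r)) := by
          rw [hγc (L1 + L2 + (n - D + e' - r)) ⟨by linarith [hr.2], by rw [hLdef]; linarith [hr.1]⟩]
          congr 1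
          ring
        rw [h1]
        exact hqsub (mem_image_of_mem γ ⟨by linarith [hr.2], by rw [hLdef]; linarith [hr.1]⟩)
      have hc1t : max ρ s < t := max_lt hρt hst
      have hqp : q = p := by
        refine eq_piece_of_two_common hTG hp hq (u := g (max ρ s)) (v := g t)
          (hseg _ ⟨le_max_right ρ s, hc1t.le⟩)
          (hqg _ ⟨le_max_left ρ s, by linarith⟩)
          hgtp (hqg _ ⟨hρt.le, hte'⟩) ?_
        intro he
        have := hggeo.injOn ⟨le_trans hρ0 (le_max_left ρ s), by linarith [ht.2]⟩ ht he
        linarith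
      have hβ1 : β rst ∈ β '' Icc 0 n ∩ p := by
        refine ⟨mem_image_of_mem β ⟨hrst0, by linarith⟩, ?_⟩
        rw [← hqp]
        exact hqβ _ ⟨le_refl _, hrst2⟩
      have hβ2 : β (n - D + e') ∈ β '' Icc 0 n ∩ p := by
        refine ⟨mem_image_of_mem β ⟨he'n, by linarith⟩, ?_⟩
        rw [← hqp]
        exact hqβ _ ⟨hrst2, le_refl _⟩
      have heqβ := hzβ hβ1 hβ2
      have hpar : rst = n - D + e' :=
        hβgeo.injOn ⟨hrst0, by linarith⟩ ⟨he'n, by linarith⟩ heqβ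
      have hαg : α rst = g e' := by
        rw [hrstαβ, hpar, ← he'β]
      have hfa := factαg rst ⟨hrst0, by linarith⟩ e' ⟨by linarith, he'D⟩ hαg
      have heC : e' ∈ C := by
        refine ⟨⟨by linarith, le_min (by linarith) he'D⟩, ?_⟩
        rw [show m - e' = rst by linarith, hαg]
      have := hρmax _ heC
      linarith

end Helpers

/-- if `y ∈ T_x` then `T_x = T_y`. -/
theorem stmt_3 {F : Type*} [MetricSpace F] [CompleteSpace F] (hF : GeodesicSpace F)
    (P : Set (Set F)) (hTG : IsTreeGraded P) (x y : F)
    (hy : y ∈ transversalTree P x) :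
    transversalTree P x = transversalTree P y := by
  ext z
  constructor
  · intro hz
    exact transversal_trans hF hTG hy hz
  · intro hz
    exact transversal_trans hF hTG (transversal_symm hy) hz
end

section
/- Let f, g be two partial functions in the tree product ΠP, and let div(f,g) be the supremum of all s' such that f and g restricted to ]0,s'[ ∩ A_f coincide. Then div(f,g) does not belong to A_f ∪ A_g. -/
open scoped Classical

/-- The set `Ω`: pairs of (distinct) points coming from one of the spaces `M i`. -/
abbrev PairVal (I : Type*) (M : I → Type*) := Σ i : I, M i × M i

/-- An element of the tree product `ΠP` of the family of metric spaces `M i`: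
a partial function from a dense open subset of `]0, d[` to `Ω`, encoded as an
`Option`-valued function, satisfying conditions (Π₁)–(Π₅). -/
structure TreeProdFun (I : Type*) (M : I → Type*) [∀ i, MetricSpace (M i)] where
  /-- the length of the interval of definition -/
  d : ℝ
  d_nonneg : 0 ≤ d
  /-- the partial function; `none` outside the domain -/
  f : ℝ → Option (PairVal I M)
  /-- (Π₁) the domain is contained in `]0, d[` … -/
  dom_sub : ∀ t : ℝ, (f t).isSome → t ∈ Set.Ioo 0 d
  /-- … it is open … -/
  dom_open : IsOpen {t : ℝ | (f t).isSome = true}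
  /-- … and dense in `]0, d[`. -/
  dom_dense : Set.Ioo 0 d ⊆ closure {t : ℝ | (f t).isSome = true}
  /-- values are pairs of *distinct* points -/
  distinct : ∀ t i (x y : M i), f t = some ⟨i, (x, y)⟩ → x ≠ y
  /-- (Π₂) `f` is locally constant on its domain -/
  locConst : ∀ t : ℝ, (f t).isSome → ∀ᶠ s in nhds t, f s = f t
  /-- (Π₃) on a maximal subinterval of the domain with value `(x,y)`, the length of the
  interval equals `dist x y` -/
  intervalLen : ∀ a b : ℝ, a < b → (∀ t ∈ Set.Ioo a b, (f t).isSome) →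
    ¬ (f a).isSome → ¬ (f b).isSome →
    ∀ t ∈ Set.Ioo a b, ∀ i (x y : M i), f t = some ⟨i, (x, y)⟩ → dist x y = b - a
  /-- (Π₄) no fake exits: no two consecutive values of the form `(x₁,x₂), (x₂,x₃)` -/
  noFakeExit : ∀ a b c : ℝ, a < b → b < c →
    (∀ t ∈ Set.Ioo a b, (f t).isSome) → (∀ t ∈ Set.Ioo b c, (f t).isSome) →
    ¬ (f a).isSome → ¬ (f b).isSome → ¬ (f c).isSome →
    ∀ s ∈ Set.Ioo a b, ∀ t ∈ Set.Ioo b c, ∀ i (x y z w : M i),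
      f s = some ⟨i, (x, y)⟩ → f t = some ⟨i, (z, w)⟩ → y ≠ z
  /-- (Π₅) no backtracking: `f` never coincides on `]p-q, p+q[` with its reflection at `p`
  composed with swapping the components of the values -/
  noBacktrack : ∀ p q : ℝ, 0 < q → Set.Ioo (p - q) (p + q) ⊆ Set.Ioo 0 d →
    ¬ ∀ t ∈ Set.Ioo (p - q) (p + q),
        f t = Option.map (fun v : PairVal I M => ⟨v.1, (v.2.2, v.2.1)⟩) (f (2 * p - t))

variable {I : Type*} {M : I → Type*} [∀ i, MetricSpace (M i)]

/-- The domain `A_f` of an element of the tree product. -/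
def TreeProdFun.dom (f : TreeProdFun I M) : Set ℝ := {t : ℝ | (f.f t).isSome}

/-- The empty function `f_∅`. -/
def emptyTPF (I : Type*) (M : I → Type*) [∀ i, MetricSpace (M i)] : TreeProdFun I M where
  d := 0
  d_nonneg := le_refl 0
  f := fun _ => none
  dom_sub := by intro t h; simp at h
  dom_open := by simp
  dom_dense := by simp
  distinct := by intro t i x y h; cases h
  locConst := by intro t h; simp at h
  intervalLen := by intro a b _ _ _ _ t ht i x y h; cases h
  noFakeExit := by intro a b c _ _ _ _ _ _ _ s hs t ht i x y z w h; cases h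
  noBacktrack := by
    intro p q hq hsub _
    have hp : p ∈ Set.Ioo (p - q) (p + q) := by constructor <;> linarith
    have := hsub hp
    simp at this

/-- The divergence point `div(f,g)`: the supremum of all `s` such that the restrictions of
`f` and `g` to `]0,s[ ∩ A_f` coincide. -/
noncomputable def divPt (f g : TreeProdFun I M) : ℝ :=
  sSup {s : ℝ | 0 ≤ s ∧ s ≤ min f.d g.d ∧
    ∀ t ∈ Set.Ioo (0 : ℝ) s, (f.f t).isSome → f.f t = g.f t}

/-- `afterPt f s` is the right endpoint of the maximal (possibly empty) interval
`]s, a[` contained in the domain of `f`; it equals `s` if there is no such interval. -/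
noncomputable def afterPt (f : TreeProdFun I M) (s : ℝ) : ℝ :=
  sSup {b : ℝ | s ≤ b ∧ b ≤ max s f.d ∧ ∀ t ∈ Set.Ioo s b, (f.f t).isSome}

/-- Distance between the second coordinates of two values in `Ω` (0 if undefined or in
different spaces; only used when the indices agree). -/
noncomputable def optSndDist : Option (PairVal I M) → Option (PairVal I M) → ℝ
  | some ⟨i, (_, y)⟩, some ⟨j, (_, w)⟩ =>
      if h : i = j then dist (cast (congrArg M h) y) w else 0
  | _, _ => 0

/-- The two values are defined and have the same first coordinate (`x_g(f) = x_f(g)`). -/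
def sameStart : Option (PairVal I M) → Option (PairVal I M) → Prop
  | some ⟨i, (x, _)⟩, some ⟨j, (z, _)⟩ => ∃ h : i = j, cast (congrArg M h) x = z
  | _, _ => False

/-- The distance function `D` on the tree product, defined case-wise: in type 1
(both functions continue after the divergence point in the same piece through the same
entrance point) via the exit points, in type 2 via the divergence point. -/
noncomputable def Dtp (f g : TreeProdFun I M) : ℝ :=
  if divPt f g < afterPt f (divPt f g) ∧ divPt f g < afterPt g (divPt f g) ∧
      sameStart (f.f ((divPt f g + afterPt f (divPt f g)) / 2))
        (g.f ((divPt f g + afterPt g (divPt f g)) / 2))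
  then (f.d - afterPt f (divPt f g)) + (g.d - afterPt g (divPt f g)) +
       optSndDist (f.f ((divPt f g + afterPt f (divPt f g)) / 2))
         (g.f ((divPt f g + afterPt g (divPt f g)) / 2))
  else (f.d - divPt f g) + (g.d - divPt f g)

/-! ### Auxiliary machinery for the proof of `stmt_5` -/

section AuxStmt5

variable {I : Type*} {M : I → Type*} [∀ i, MetricSpace (M i)]

lemma TreeProdFun.none_outside (h : TreeProdFun I M) {t : ℝ} (ht : t ∉ Set.Ioo 0 h.d) :
    h.f t = none := by
  by_contra hc
  exact ht (h.dom_sub t (Option.ne_none_iff_isSome.mp hc))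

lemma TreeProdFun.none_closed (h : TreeProdFun I M) :
    IsClosed {t : ℝ | h.f t = none} := by
  have he : {t : ℝ | h.f t = none} = {t : ℝ | (h.f t).isSome = true}ᶜ := by
    ext t
    simp [Option.isSome_iff_ne_none]
  rw [he]
  exact h.dom_open.isClosed_compl

/-- Left endpoint of the maximal interval of the domain of `h` around `t0`. -/
noncomputable def Lpt (h : TreeProdFun I M) (t0 : ℝ) : ℝ :=
  sSup {s : ℝ | s ≤ t0 ∧ h.f s = none}

/-- Right endpoint of the maximal interval of the domain of `h` around `t0`. -/
noncomputable def Rpt (h : TreeProdFun I M) (t0 : ℝ) : ℝ :=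
  sInf {s : ℝ | t0 ≤ s ∧ h.f s = none}

lemma Rpt_le (h : TreeProdFun I M) {t0 b : ℝ} (hb : t0 ≤ b) (hnb : h.f b = none) :
    Rpt h t0 ≤ b :=
  csInf_le ⟨t0, fun s hs => hs.1⟩ ⟨hb, hnb⟩

lemma maxInterval (h : TreeProdFun I M) (t0 : ℝ) (h0 : (h.f t0).isSome) :
    0 ≤ Lpt h t0 ∧ Lpt h t0 < t0 ∧ t0 < Rpt h t0 ∧ Rpt h t0 ≤ h.d ∧
    h.f (Lpt h t0) = none ∧ h.f (Rpt h t0) = none ∧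
    ∀ t ∈ Set.Ioo (Lpt h t0) (Rpt h t0), h.f t = h.f t0 := by
  obtain ⟨ht0pos, ht0d⟩ := h.dom_sub t0 h0
  have hne0 : h.f t0 ≠ none := Option.ne_none_iff_isSome.mpr h0
  have hL0 : (0 : ℝ) ∈ {s : ℝ | s ≤ t0 ∧ h.f s = none} :=
    ⟨le_of_lt ht0pos, h.none_outside (by simp)⟩
  have hRd : h.d ∈ {s : ℝ | t0 ≤ s ∧ h.f s = none} :=
    ⟨le_of_lt ht0d, h.none_outside (by simp)⟩
  have hSLbdd : BddAbove {s : ℝ | s ≤ t0 ∧ h.f s = none} := ⟨t0, fun s hs => hs.1⟩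
  have hSRbdd : BddBelow {s : ℝ | t0 ≤ s ∧ h.f s = none} := ⟨t0, fun s hs => hs.1⟩
  have hSLcl : IsClosed {s : ℝ | s ≤ t0 ∧ h.f s = none} := by
    have he : {s : ℝ | s ≤ t0 ∧ h.f s = none} = Set.Iic t0 ∩ {s : ℝ | h.f s = none} := rfl
    rw [he]
    exact isClosed_Iic.inter h.none_closed
  have hSRcl : IsClosed {s : ℝ | t0 ≤ s ∧ h.f s = none} := by
    have he : {s : ℝ | t0 ≤ s ∧ h.f s = none} = Set.Ici t0 ∩ {s : ℝ | h.f s = none} := rfl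
    rw [he]
    exact isClosed_Ici.inter h.none_closed
  have hLmem : Lpt h t0 ∈ {s : ℝ | s ≤ t0 ∧ h.f s = none} :=
    hSLcl.csSup_mem ⟨0, hL0⟩ hSLbdd
  have hRmem : Rpt h t0 ∈ {s : ℝ | t0 ≤ s ∧ h.f s = none} :=
    hSRcl.csInf_mem ⟨h.d, hRd⟩ hSRbdd
  have hL0' : 0 ≤ Lpt h t0 := le_csSup hSLbdd hL0
  have hLt0 : Lpt h t0 < t0 :=
    lt_of_le_of_ne hLmem.1 (fun e => hne0 (by rw [← e]; exact hLmem.2))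
  have ht0R : t0 < Rpt h t0 :=
    lt_of_le_of_ne hRmem.1 (fun e => hne0 (by rw [e]; exact hRmem.2))
  have hRd' : Rpt h t0 ≤ h.d := csInf_le hSRbdd hRd
  have hsome : ∀ t ∈ Set.Ioo (Lpt h t0) (Rpt h t0), (h.f t).isSome := by
    intro t ht
    by_contra hn
    rw [Option.not_isSome_iff_eq_none] at hn
    rcases lt_trichotomy t t0 with h1 | h1 | h1
    · exact absurd (le_csSup hSLbdd ⟨le_of_lt h1, hn⟩) (not_le.mpr ht.1)
    · exact hne0 (h1 ▸ hn)
    · exact absurd (csInf_le hSRbdd ⟨le_of_lt h1, hn⟩) (not_le.mpr ht.2)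
  refine ⟨hL0', hLt0, ht0R, hRd', hLmem.2, hRmem.2, ?_⟩
  have hu : IsOpen {t : ℝ | h.f t = h.f t0} := by
    rw [isOpen_iff_mem_nhds]
    intro t ht
    have hts : (h.f t).isSome := by
      rw [Set.mem_setOf_eq] at ht; rw [ht]; exact h0
    exact (h.locConst t hts).mono fun s hs => by
      show h.f s = h.f t0
      rw [hs]; exact ht
  have hvopen : IsOpen {t : ℝ | (h.f t).isSome ∧ h.f t ≠ h.f t0} := by
    rw [isOpen_iff_mem_nhds]
    intro t ht
    obtain ⟨hts, htne⟩ := ht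
    exact (h.locConst t hts).mono fun s hs =>
      ⟨by rw [hs]; exact hts, by rw [hs]; exact htne⟩
  have hdisj : Disjoint {t : ℝ | h.f t = h.f t0} {t : ℝ | (h.f t).isSome ∧ h.f t ≠ h.f t0} :=
    Set.disjoint_left.mpr fun t htu htv => htv.2 htu
  have hcover : Set.Ioo (Lpt h t0) (Rpt h t0) ⊆
      {t : ℝ | h.f t = h.f t0} ∪ {t : ℝ | (h.f t).isSome ∧ h.f t ≠ h.f t0} := by
    intro t ht
    by_cases hc : h.f t = h.f t0
    · exact Or.inl hc
    · exact Or.inr ⟨hsome t ht, hc⟩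
  have hnea : (Set.Ioo (Lpt h t0) (Rpt h t0) ∩ {t : ℝ | h.f t = h.f t0}).Nonempty :=
    ⟨t0, ⟨hLt0, ht0R⟩, rfl⟩
  exact isPreconnected_Ioo.subset_left_of_subset_union hu hvopen hdisj hcover hnea

lemma maxInterval_dist (h : TreeProdFun I M) (t0 : ℝ) (i : I) (x y : M i)
    (h0 : h.f t0 = some ⟨i, (x, y)⟩) : dist x y = Rpt h t0 - Lpt h t0 := by
  have hs : (h.f t0).isSome := by rw [h0]; rfl
  obtain ⟨_, hLt, htR, _, hLn, hRn, hconst⟩ := maxInterval h t0 hs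
  exact h.intervalLen (Lpt h t0) (Rpt h t0) (hLt.trans htR)
    (fun t ht => by rw [hconst t ht]; exact hs)
    (by simp [hLn]) (by simp [hRn])
    t0 ⟨hLt, htR⟩ i x y h0

/-- The set whose supremum defines `divPt`. -/
def coSet (f g : TreeProdFun I M) : Set ℝ :=
  {s : ℝ | 0 ≤ s ∧ s ≤ min f.d g.d ∧
    ∀ t ∈ Set.Ioo (0 : ℝ) s, (f.f t).isSome → f.f t = g.f t}

lemma divPt_eq_sSup (f g : TreeProdFun I M) : divPt f g = sSup (coSet f g) := rfl

lemma zero_mem_coSet (f g : TreeProdFun I M) : (0 : ℝ) ∈ coSet f g :=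
  ⟨le_refl 0, le_min f.d_nonneg g.d_nonneg, fun t ht => absurd ht (by simp)⟩

lemma coSet_bdd (f g : TreeProdFun I M) : BddAbove (coSet f g) :=
  ⟨min f.d g.d, fun s hs => hs.2.1⟩

lemma divPt_mem (f g : TreeProdFun I M) : divPt f g ∈ coSet f g := by
  refine ⟨le_csSup (coSet_bdd f g) (zero_mem_coSet f g),
    csSup_le ⟨0, zero_mem_coSet f g⟩ (fun s hs => hs.2.1), ?_⟩
  intro t ht hts
  obtain ⟨s, hsmem, hlt⟩ := exists_lt_of_lt_csSup ⟨0, zero_mem_coSet f g⟩ ht.2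
  exact hsmem.2.2 t ⟨ht.1, hlt⟩ hts

lemma exists_some_of_Ioo (h : TreeProdFun I M) {a b : ℝ} (hab : a < b)
    (hsub : Set.Ioo a b ⊆ Set.Ioo 0 h.d) :
    ∃ t ∈ Set.Ioo a b, (h.f t).isSome := by
  obtain ⟨t, ht⟩ := Set.nonempty_Ioo.mpr hab
  have hcl : t ∈ closure {t : ℝ | (h.f t).isSome = true} := h.dom_dense (hsub ht)
  rcases mem_closure_iff.mp hcl (Set.Ioo a b) isOpen_Ioo ht with ⟨s, hs1, hs2⟩
  exact ⟨s, hs1, hs2⟩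

lemma keyF (f g : TreeProdFun I M) (hfD : (f.f (divPt f g)).isSome) : False := by
  obtain ⟨hD0, hDmin, hco⟩ := divPt_mem f g
  set D := divPt f g with hDdef
  obtain ⟨hDpos, hDf⟩ := f.dom_sub D hfD
  by_cases hgD : (g.f D).isSome
  · -- both defined at D : extend the coincidence interval, contradicting sup
    obtain ⟨hDpos', hDg⟩ := g.dom_sub D hgD
    have hev := (f.locConst D hfD).and (g.locConst D hgD)
    rw [Metric.eventually_nhds_iff] at hev
    obtain ⟨ε, hε, hball⟩ := hev
    set t := max (D - ε / 2) (D / 2) with htdef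
    have htD : t < D := max_lt (by linarith) (by linarith)
    have ht0 : 0 < t := lt_of_lt_of_le (by linarith) (le_max_right _ _)
    have htball : dist t D < ε := by
      rw [Real.dist_eq, abs_of_nonpos (by linarith)]
      have h1 : D - ε / 2 ≤ t := le_max_left _ _
      linarith
    obtain ⟨hft, hgt⟩ := hball htball
    have hfg : f.f D = g.f D := by
      have he := hco t ⟨ht0, htD⟩ (by rw [hft]; exact hfD)
      rw [hft, hgt] at he
      exact he
    have hs'mem : min (D + ε / 2) (min f.d g.d) ∈ coSet f g := by
      refine ⟨le_min (by linarith) (le_min f.d_nonneg g.d_nonneg), min_le_right _ _, ?_⟩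
      intro u hu hfu
      rcases lt_or_ge u D with h1 | h1
      · exact hco u ⟨hu.1, h1⟩ hfu
      · have hub : dist u D < ε := by
          rw [Real.dist_eq, abs_of_nonneg (by linarith)]
          have h2 : u < D + ε / 2 := lt_of_lt_of_le hu.2 (min_le_left _ _)
          linarith
        obtain ⟨hfu', hgu'⟩ := hball hub
        rw [hfu', hgu', hfg]
    have hgt' : D < min (D + ε / 2) (min f.d g.d) := lt_min (by linarith) (lt_min hDf hDg)
    have hle := le_csSup (coSet_bdd f g) hs'mem
    rw [← divPt_eq_sSup] at hle
    exact absurd hle (not_le.mpr hgt')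
  · -- f defined at D, g not : interval length contradiction
    have hgN : g.f D = none := by
      rwa [Option.not_isSome_iff_eq_none] at hgD
    obtain ⟨v, hv⟩ := Option.isSome_iff_exists.mp hfD
    obtain ⟨i, x, y⟩ := v
    obtain ⟨hLf0, hLfD, hDRf, hRfd, hLfn, hRfn, hfconst⟩ := maxInterval f D hfD
    have hdistF : dist x y = Rpt f D - Lpt f D := maxInterval_dist f D i x y hv
    -- g agrees with the value of f on ]Lpt f D, D[
    have hgval : ∀ t ∈ Set.Ioo (Lpt f D) D, g.f t = some ⟨i, (x, y)⟩ := by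
      intro t ht
      have hft : f.f t = some ⟨i, (x, y)⟩ := by
        rw [hfconst t ⟨ht.1, ht.2.trans hDRf⟩]; exact hv
      have := hco t ⟨lt_of_le_of_lt hLf0 ht.1, ht.2⟩ (by rw [hft]; rfl)
      rw [hft] at this
      exact this.symm
    set t1 := (Lpt f D + D) / 2 with ht1def
    have ht1mem : t1 ∈ Set.Ioo (Lpt f D) D := ⟨by rw [ht1def]; linarith, by rw [ht1def]; linarith⟩
    have hg1 : g.f t1 = some ⟨i, (x, y)⟩ := hgval t1 ht1mem
    have hg1s : (g.f t1).isSome := by rw [hg1]; rfl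
    obtain ⟨hLg0, hLgt1, ht1Rg, hRgd, hLgn, hRgn, hgconst⟩ := maxInterval g t1 hg1s
    have hdistG : dist x y = Rpt g t1 - Lpt g t1 := maxInterval_dist g t1 i x y hg1
    -- Rpt g t1 = D
    have hRgD : Rpt g t1 = D := by
      have hle : Rpt g t1 ≤ D := Rpt_le g (le_of_lt ht1mem.2) hgN
      rcases lt_or_eq_of_le hle with hlt | heq
      · exfalso
        have h1 : g.f (Rpt g t1) = some ⟨i, (x, y)⟩ :=
          hgval _ ⟨ht1mem.1.trans ht1Rg, hlt⟩
        rw [hRgn] at h1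
        cases h1
      · exact heq
    -- Lpt g t1 = Lpt f D
    have hLgLf : Lpt g t1 = Lpt f D := by
      rcases lt_trichotomy (Lpt g t1) (Lpt f D) with hlt | heq | hgt
      · exfalso
        -- dense point of dom f inside ]Lpt g t1, Lpt f D[
        obtain ⟨t2, ht2, hft2s⟩ := exists_some_of_Ioo f hlt
          (fun s hs => ⟨lt_of_le_of_lt hLg0 hs.1, lt_trans (lt_trans hs.2 hLfD) hDf⟩)
        have ht2D : t2 < D := ht2.2.trans hLfD
        have hgt2 : g.f t2 = some ⟨i, (x, y)⟩ := by
          rw [hgconst t2 ⟨ht2.1, by rw [hRgD]; exact ht2D⟩]; exact hg1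
        have hft2 : f.f t2 = some ⟨i, (x, y)⟩ := by
          rw [hco t2 ⟨lt_of_le_of_lt hLg0 ht2.1, ht2D⟩ hft2s]; exact hgt2
        obtain ⟨hL20, hL2t2, ht2R2, _, hL2n, hR2n, hf2const⟩ := maxInterval f t2 hft2s
        have hdist2 : dist x y = Rpt f t2 - Lpt f t2 := maxInterval_dist f t2 i x y hft2
        have hR2le : Rpt f t2 ≤ Lpt f D := Rpt_le f (le_of_lt ht2.2) hLfn
        have hL2ge : Lpt g t1 ≤ Lpt f t2 := by
          by_contra hcon
          push_neg at hcon
          rcases le_or_gt (Lpt g t1) 0 with h0 | h0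
          · linarith
          · have hfLg : f.f (Lpt g t1) = some ⟨i, (x, y)⟩ := by
              rw [hf2const (Lpt g t1) ⟨hcon, ht2.1.trans ht2R2⟩]; exact hft2
            have hgLg := hco (Lpt g t1) ⟨h0, hLgt1.trans ht1mem.2⟩ (by rw [hfLg]; rfl)
            rw [hfLg, hLgn] at hgLg
            cases hgLg
        have heq1 : dist x y = D - Lpt g t1 := by rw [hdistG, hRgD]
        linarith
      · exact heq
      · exfalso
        have hLgpos : 0 < Lpt g t1 := lt_of_le_of_lt hLf0 hgt
        have hfLg : f.f (Lpt g t1) = some ⟨i, (x, y)⟩ := by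
          rw [hfconst (Lpt g t1) ⟨hgt, lt_trans (hLgt1.trans ht1mem.2) hDRf⟩]; exact hv
        have hgLg := hco (Lpt g t1) ⟨hLgpos, hLgt1.trans ht1mem.2⟩ (by rw [hfLg]; rfl)
        rw [hfLg, hLgn] at hgLg
        cases hgLg
    have heq1 : dist x y = D - Lpt f D := by rw [hdistG, hRgD, hLgLf]
    linarith

lemma keyG (f g : TreeProdFun I M) (hfN : f.f (divPt f g) = none)
    (hgD : (g.f (divPt f g)).isSome) : False := by
  obtain ⟨hD0, hDmin, hco⟩ := divPt_mem f g
  set D := divPt f g with hDdef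
  obtain ⟨hDpos, hDg⟩ := g.dom_sub D hgD
  have hDfd : D ≤ f.d := hDmin.trans (min_le_left _ _)
  obtain ⟨w, hw⟩ := Option.isSome_iff_exists.mp hgD
  obtain ⟨j, z, u⟩ := w
  obtain ⟨hLg0, hLgD, hDRg, hRgd, hLgn, hRgn, hgconst⟩ := maxInterval g D hgD
  have hdistG : dist z u = Rpt g D - Lpt g D := maxInterval_dist g D j z u hw
  -- find a point of dom f in ]Lpt g D, D[
  obtain ⟨t3, ht3, hft3s⟩ := exists_some_of_Ioo f hLgD
    (fun s hs => ⟨lt_of_le_of_lt hLg0 hs.1, lt_of_lt_of_le hs.2 hDfd⟩)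
  have hgt3 : g.f t3 = some ⟨j, (z, u)⟩ := by
    rw [hgconst t3 ⟨ht3.1, ht3.2.trans hDRg⟩]; exact hw
  have hft3 : f.f t3 = some ⟨j, (z, u)⟩ := by
    rw [hco t3 ⟨lt_of_le_of_lt hLg0 ht3.1, ht3.2⟩ hft3s]; exact hgt3
  obtain ⟨hL30, hL3t3, ht3R3, _, hL3n, hR3n, hf3const⟩ := maxInterval f t3 hft3s
  have hdist3 : dist z u = Rpt f t3 - Lpt f t3 := maxInterval_dist f t3 j z u hft3
  have hR3le : Rpt f t3 ≤ D := Rpt_le f (le_of_lt ht3.2) hfN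
  have hL3ge : Lpt g D ≤ Lpt f t3 := by
    by_contra hcon
    push_neg at hcon
    rcases le_or_gt (Lpt g D) 0 with h0 | h0
    · linarith
    · have hfLg : f.f (Lpt g D) = some ⟨j, (z, u)⟩ := by
        rw [hf3const (Lpt g D) ⟨hcon, ht3.1.trans ht3R3⟩]; exact hft3
      have hgLg := hco (Lpt g D) ⟨h0, hLgD⟩ (by rw [hfLg]; rfl)
      rw [hfLg, hLgn] at hgLg
      cases hgLg
  linarith

end AuxStmt5

/-- the divergence point of two elements of the tree product belongs to
neither of their domains. -/

theorem stmt_5 (f g : TreeProdFun I M) : divPt f g ∉ f.dom ∪ g.dom := by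
  intro hdom
  rcases hdom with hf | hg
  · exact keyF f g hf
  · by_cases hfD : (f.f (divPt f g)).isSome
    · exact keyF f g hfD
    · have hfN : f.f (divPt f g) = none := by
        rwa [Option.not_isSome_iff_eq_none] at hfD
      exact keyG f g hfN hg
end
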